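/- Let G be a non-abelian finite group admitting a GRR and let m ≥ 1 be an integer. Then G admits an m-GRR. -/

import Mathlib

/-- A permutation `σ` of the vertex set is an automorphism of the simple graph `Γ`. -/
def IsGraphAut {V : Type*} (Γ : SimpleGraph V) (σ : Equiv.Perm V) : Prop :=
  ∀ u v : V, Γ.Adj (σ u) (σ v) ↔ Γ.Adj u v

/-- `G` admits an `m`-graphical regular representation: a regular finite simple graph whose
full automorphism group is (the image of) `G`, acting semiregularly with exactly `m` orbits. -/
def HasMGRR (G : Type*) [Group G] (m : ℕ) : Prop :=
  ∃ (V : Type) (_ : Fintype V) (Γ : SimpleGraph V) (ρ : G →* Equiv.Perm V),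
    (∃ d : ℕ, ∀ v : V, (Γ.neighborSet v).ncard = d) ∧
    (∀ g : G, IsGraphAut Γ (ρ g)) ∧
    (∀ σ : Equiv.Perm V, IsGraphAut Γ σ → ∃ g : G, ρ g = σ) ∧
    Function.Injective ⇑ρ ∧
    (∀ (g : G) (v : V), ρ g v = v → g = 1) ∧
    (∃ reps : Fin m → V, ∀ v : V, ∃! i : Fin m, ∃ g : G, ρ g (reps i) = v)

/-- From a GRR we can extract a "rigid Cayley structure" on `G` itself. -/
theorem extract_cayley (G : Type*) [Group G] [Finite G] (hGRR : HasMGRR G 1) :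
    ∃ S : Set G, (1:G) ∉ S ∧ (∀ s ∈ S, s⁻¹ ∈ S) ∧
      (∀ f : G → G, Function.Bijective f →
        (∀ a b : G, (f a)⁻¹ * f b ∈ S ↔ a⁻¹ * b ∈ S) → ∃ c : G, ∀ g, f g = c * g) := by
  obtain ⟨V, hFin, Γ, ρ, -, hauts, hfull, -, hsemi, reps, horb⟩ := hGRR
  set v₀ := reps 0 with hv₀
  -- the orbit map is bijective
  have hinj : Function.Injective (fun g : G => ρ g v₀) := by
    intro a b hab
    simp only at hab
    have : ρ (b⁻¹ * a) v₀ = v₀ := by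
      rw [map_mul, Equiv.Perm.mul_apply, hab, ← Equiv.Perm.mul_apply, ← map_mul,
        inv_mul_cancel, map_one, Equiv.Perm.one_apply]
    have h3 := hsemi _ _ this
    have : a = b := by
      have := congrArg (fun z => b * z) h3
      simpa [mul_assoc] using this
    exact this
  have hsurj : Function.Surjective (fun g : G => ρ g v₀) := by
    intro v
    obtain ⟨i, ⟨g, hg⟩, -⟩ := horb v
    refine ⟨g, ?_⟩
    have : i = 0 := Subsingleton.elim _ _
    rw [this] at hg
    exact hg
  set S : Set G := {s : G | Γ.Adj v₀ (ρ s v₀)} with hS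
  have hAdj : ∀ a b : G, Γ.Adj (ρ a v₀) (ρ b v₀) ↔ a⁻¹ * b ∈ S := by
    intro a b
    have h1 := (hauts a⁻¹ (ρ a v₀) (ρ b v₀)).symm
    have e1 : ρ a⁻¹ (ρ a v₀) = v₀ := by
      rw [← Equiv.Perm.mul_apply, ← map_mul, inv_mul_cancel, map_one, Equiv.Perm.one_apply]
    have e2 : ρ a⁻¹ (ρ b v₀) = ρ (a⁻¹ * b) v₀ := by
      rw [map_mul, Equiv.Perm.mul_apply]
    rw [e1, e2] at h1
    exact h1.trans (Iff.rfl)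
  refine ⟨S, ?_, ?_, ?_⟩
  · intro h1
    have : Γ.Adj v₀ (ρ 1 v₀) := h1
    rw [map_one, Equiv.Perm.one_apply] at this
    exact Γ.loopless.irrefl v₀ this
  · intro s hs
    have : Γ.Adj (ρ s v₀) (ρ 1 v₀) := by
      rw [map_one, Equiv.Perm.one_apply]
      exact (Γ.adj_symm (by exact hs))
    have := (hAdj s 1).mp this
    rwa [mul_one] at this
  · intro f hf hpres
    set e : G ≃ V := Equiv.ofBijective _ ⟨hinj, hsurj⟩ with he
    have heapp : ∀ g : G, e g = ρ g v₀ := fun g => rfl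
    set σ : Equiv.Perm V := (e.symm.trans (Equiv.ofBijective f hf)).trans e with hσ
    have hσapp : ∀ v : V, σ v = e (f (e.symm v)) := fun v => rfl
    have haut : IsGraphAut Γ σ := by
      intro u v
      rw [hσapp u, hσapp v, heapp, heapp]
      rw [hAdj, hpres]
      conv_rhs => rw [show u = e (e.symm u) by simp, show v = e (e.symm v) by simp]
      rw [heapp, heapp, hAdj]
    obtain ⟨g, hg⟩ := hfull σ haut
    refine ⟨g, fun a => ?_⟩
    have : σ (e a) = e (f a) := by rw [hσapp]; simp
    rw [← hg] at this
    have h2 : ρ g (ρ a v₀) = ρ (f a) v₀ := by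
      rw [← heapp, ← heapp]; exact this
    rw [← Equiv.Perm.mul_apply, ← map_mul] at h2
    exact (hinj h2).symm

/-- a rigid Cayley structure on a nonabelian group gives a non-normal piece of S -/
theorem extract_txS (G : Type*) [Group G] [Finite G]
    (hG : ¬ ∀ a b : G, a * b = b * a) (S : Set G)
    (hrigid : ∀ f : G → G, Function.Bijective f →
        (∀ a b : G, (f a)⁻¹ * f b ∈ S ↔ a⁻¹ * b ∈ S) → ∃ c : G, ∀ g, f g = c * g) :
    ∃ t x : G, x ∈ S ∧ t * x * t⁻¹ ∉ S := by
  by_contra hno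
  push_neg at hno
  apply hG
  have hconj : ∀ (t y : G), y ∈ S ↔ t * y * t⁻¹ ∈ S := by
    intro t y
    constructor
    · exact hno t y
    · intro h
      have := hno t⁻¹ _ h
      group at this
      exact this
  have key : ∀ g : G, ∃ c : G, ∀ u : G, u * g = c * u := by
    intro g
    apply hrigid (fun u => u * g)
    · constructor
      · intro a b hab
        simp only at hab
        exact mul_right_cancel hab
      · intro b; exact ⟨b * g⁻¹, by group⟩
    · intro a b
      have heq : (a * g)⁻¹ * (b * g) = g⁻¹ * (a⁻¹ * b) * g := by group
      show (a * g)⁻¹ * (b * g) ∈ S ↔ _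
      rw [heq]
      constructor
      · intro h
        have h2 : g⁻¹ * (a⁻¹ * b) * g⁻¹⁻¹ ∈ S := by group at h ⊢; exact h
        exact (hconj g⁻¹ (a⁻¹*b)).mpr h2
      · intro h
        have h2 := (hconj g⁻¹ (a⁻¹*b)).mp h
        group at h2 ⊢
        exact h2
  intro a b
  obtain ⟨c, hc⟩ := key b
  have h1 := hc 1
  rw [one_mul, mul_one] at h1
  have h2 := hc a
  rw [← h1] at h2
  exact h2

set_option linter.unusedSectionVars false

section KeyAlg
variable {H : Type*} [Group H]

theorem shift_eq_one {u y c : H} (hu : u ≠ 1) (hy : y ≠ 1) (huy : u * y ≠ 1) (huyne : u ≠ y)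
    (hc : ∀ k : H, k ∈ ({1, u, u*y} : Set H) ↔ c * k ∈ ({1, u, u*y} : Set H)) : c = 1 := by
  have hmem : ∀ z : H, z ∈ ({1, u, u*y} : Set H) ↔ (z = 1 ∨ z = u ∨ z = u*y) := by
    intro z; simp [Set.mem_insert_iff]
  have hyK : y = 1 ∨ y = u ∨ y = u * y → False := by
    rintro (h | h | h)
    · exact hy h
    · exact huyne h.symm
    · exact hu (mul_right_cancel (b := y) (by rw [← h, one_mul]))
  have hc1 : c = 1 ∨ c = u ∨ c = u*y := by
    have := (hc 1).mp (by simp)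
    rwa [mul_one, hmem] at this
  rcases hc1 with h | hcu | hcuy
  · exact h
  · exfalso
    have h2 : u * u = 1 ∨ u * u = u ∨ u * u = u * y := by
      have := (hc u).mp (by rw [hmem]; tauto)
      rw [hcu, hmem] at this; exact this
    rcases h2 with h2 | h2 | h2
    · have h3 : u * (u * y) = 1 ∨ u * (u*y) = u ∨ u * (u*y) = u * y := by
        have := (hc (u*y)).mp (by rw [hmem]; tauto)
        rw [hcu, hmem] at this; exact this
      have hyy : u * (u * y) = y := by rw [← mul_assoc, h2, one_mul]
      rw [hyy] at h3
      exact hyK h3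
    · exact hu (mul_left_cancel (a := u) (by rw [h2, mul_one]))
    · exact huyne (mul_left_cancel h2)
  · exfalso
    have h2 : u*y*u = 1 ∨ u*y*u = u ∨ u*y*u = u*y := by
      have := (hc u).mp (by rw [hmem]; tauto)
      rw [hcuy, hmem] at this; exact this
    rcases h2 with h2 | h2 | h2
    · have h3 : u*y*(u*y) = 1 ∨ u*y*(u*y) = u ∨ u*y*(u*y) = u*y := by
        have := (hc (u*y)).mp (by rw [hmem]; tauto)
        rw [hcuy, hmem] at this; exact this
      have hyy : u*y*(u*y) = y := by rw [← mul_assoc, h2, one_mul]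
      rw [hyy] at h3
      exact hyK h3
    · exact huy (mul_right_cancel (b := u) (by rw [h2, one_mul]))
    · exact hu (mul_left_cancel (a := u*y) (by rw [h2, mul_one]))

end KeyAlg

section Core
variable {H : Type*} [Group H]

variable (S : Set H) (t x : H)

def Kp : Set H := {1, t, t*x}
def Km : Set H := {1, t⁻¹, x⁻¹*t⁻¹}

def Dset (W : Set H) : Set (H × H) := {q | q.1 ∈ W ∧ q.2 ∈ W ∧ q.1 * q.2⁻¹ ∈ S}
def Eset (W : Set H) : Set (H × H) := {q | q.1 ∈ W ∧ q.2 ∈ W ∧ q.1⁻¹ * q.2 ∈ S}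

variable {S t x}
variable (hS1 : (1:H) ∉ S) (hSsym : ∀ s ∈ S, s⁻¹ ∈ S) (hx : x ∈ S) (htx : t * x * t⁻¹ ∉ S)

section facts
include hS1 hx htx

lemma fact_x1 : x ≠ 1 := fun h => hS1 (h ▸ hx)
lemma fact_t1 : t ≠ 1 := by
  intro h; apply htx; rw [h]; simpa using hx
lemma fact_tx1 : t * x ≠ 1 := by
  intro h
  apply htx
  have hxt : x = t⁻¹ := by
    have := congrArg (fun z => t⁻¹ * z) h
    simpa [← mul_assoc] using this
  rw [h, one_mul, ← hxt]; exact hx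
lemma fact_tnex : t ≠ x := by
  intro h
  apply htx
  rw [h]
  have : x * x * x⁻¹ = x := by group
  rw [this]; exact hx

include hSsym
lemma fact_xinv : x⁻¹ ∈ S := hSsym x hx
lemma fact_txinv : t * x⁻¹ * t⁻¹ ∉ S := by
  intro h
  apply htx
  have := hSsym _ h
  have e : (t * x⁻¹ * t⁻¹)⁻¹ = t * x * t⁻¹ := by group
  rwa [e] at this

end facts

lemma mem_Km_iff {a : H} : a ∈ Km t x ↔ a⁻¹ ∈ Kp t x := by
  simp only [Km, Kp, Set.mem_insert_iff, Set.mem_singleton_iff]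
  constructor
  · rintro (rfl | rfl | rfl)
    · left; group
    · right; left; group
    · right; right; group
  · rintro (h | h | h)
    · left; rw [← inv_inv a, h]; group
    · right; left; rw [← inv_inv a, h]
    · right; right; rw [← inv_inv a, h]; group

lemma Km_form : Km t x = ({1, t⁻¹, t⁻¹ * (t * x⁻¹ * t⁻¹)} : Set H) := by
  have h : t⁻¹ * (t * x⁻¹ * t⁻¹) = x⁻¹ * t⁻¹ := by group
  rw [h]; rfl

include hS1 hx htx in
lemma shift_Kp {c : H} (hc : ∀ k : H, k ∈ Kp t x ↔ c * k ∈ Kp t x) : c = 1 :=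
  shift_eq_one (fact_t1 hS1 hx htx) (fact_x1 hS1 hx htx) (fact_tx1 hS1 hx htx)
    (fact_tnex hS1 hx htx) hc

include hS1 hSsym hx htx in
lemma shift_Km {c : H} (hc : ∀ k : H, k ∈ Km t x ↔ c * k ∈ Km t x) : c = 1 := by
  rw [Km_form] at hc
  refine shift_eq_one ?_ ?_ ?_ ?_ hc
  · exact inv_ne_one.mpr (fact_t1 hS1 hx htx)
  · intro h
    apply fact_x1 hS1 hx htx
    have h2 : x⁻¹ = t⁻¹ * (t * x⁻¹ * t⁻¹) * t := by group
    rw [h] at h2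
    simp only [mul_one, inv_mul_cancel] at h2
    exact inv_eq_one.mp h2
  · intro h
    apply fact_tx1 hS1 hx htx
    rw [← inv_eq_one, show (t*x)⁻¹ = t⁻¹*(t*x⁻¹*t⁻¹) from by group, h]
  · intro h
    apply fact_tnex hS1 hx htx
    have h2 := congrArg (fun z => z * t) h
    simp only [inv_mul_cancel] at h2
    have h3 := congrArg (fun z => z * x) h2
    simp only [one_mul] at h3
    rw [h3]
    group



section Count
variable [Finite H]

lemma mem_of_eqS {a b : H} (h : a ∈ S) (e : b = a) : b ∈ S := e ▸ h

include hSsym in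
lemma mem_of_invS {a b : H} (h : a ∈ S) (e : b = a⁻¹) : b ∈ S := e ▸ hSsym a h

include hS1 hSsym hx htx

lemma Eset_Kp_eq :
    Eset S (Kp t x) = Dset S (Kp t x) ∪ {((t, t*x) : H × H), ((t*x, t) : H × H)} := by
  have htxiS := fact_txinv hS1 hSsym hx htx
  ext ⟨a, b⟩
  simp only [Eset, Dset, Kp, Set.mem_union, Set.mem_setOf_eq, Set.mem_insert_iff,
    Set.mem_singleton_iff, Prod.mk.injEq]
  constructor
  · rintro ⟨(rfl | rfl | rfl), (rfl | rfl | rfl), hab⟩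
    · exact absurd (mem_of_eqS (show ((1:H))⁻¹ * 1 ∈ S from hab) (by group)) hS1
    · exact Or.inl ⟨Or.inl rfl, Or.inr (Or.inl rfl), mem_of_invS hSsym hab (by group)⟩
    · exact Or.inl ⟨Or.inl rfl, Or.inr (Or.inr rfl), mem_of_invS hSsym hab (by group)⟩
    · exact Or.inl ⟨Or.inr (Or.inl rfl), Or.inl rfl, mem_of_invS hSsym hab (by group)⟩
    · exact absurd (mem_of_eqS hab (by group) : (1:H) ∈ S) hS1
    · exact Or.inr (Or.inl ⟨rfl, rfl⟩)
    · exact Or.inl ⟨Or.inr (Or.inr rfl), Or.inl rfl, mem_of_invS hSsym hab (by group)⟩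
    · exact Or.inr (Or.inr ⟨rfl, rfl⟩)
    · exact absurd (mem_of_eqS hab (by group) : (1:H) ∈ S) hS1
  · rintro (⟨(rfl | rfl | rfl), (rfl | rfl | rfl), hab⟩ | ⟨rfl, rfl⟩ | ⟨rfl, rfl⟩)
    · exact absurd (mem_of_eqS hab (by group) : (1:H) ∈ S) hS1
    · exact ⟨Or.inl rfl, Or.inr (Or.inl rfl), mem_of_invS hSsym hab (by group)⟩
    · exact ⟨Or.inl rfl, Or.inr (Or.inr rfl), mem_of_invS hSsym hab (by group)⟩
    · exact ⟨Or.inr (Or.inl rfl), Or.inl rfl, mem_of_invS hSsym hab (by group)⟩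
    · exact absurd (mem_of_eqS hab (by group) : (1:H) ∈ S) hS1
    · refine absurd (mem_of_invS hSsym hab ?_) htx
      group
    · exact ⟨Or.inr (Or.inr rfl), Or.inl rfl, mem_of_invS hSsym hab (by group)⟩
    · refine absurd (mem_of_eqS hab ?_) htx
      group
    · exact absurd (mem_of_eqS hab (by group) : (1:H) ∈ S) hS1
    · exact ⟨Or.inr (Or.inl rfl), Or.inr (Or.inr rfl), mem_of_eqS hx (by group)⟩
    · exact ⟨Or.inr (Or.inr rfl), Or.inr (Or.inl rfl), mem_of_invS hSsym hx (by group)⟩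

lemma ncard_Eset_Kp :
    (Eset S (Kp t x)).ncard = (Dset S (Kp t x)).ncard + 2 := by
  rw [Eset_Kp_eq hS1 hSsym hx htx]
  have hne : ((t, t*x) : H × H) ≠ ((t*x, t) : H × H) := by
    intro h
    have h1 := congrArg Prod.fst h
    simp only at h1
    apply fact_x1 hS1 hx htx
    have h2 := congrArg (fun z => t⁻¹ * z) h1
    simpa [← mul_assoc] using h2.symm
  have hdisj : Disjoint (Dset S (Kp t x))
      ({((t, t*x) : H × H), ((t*x, t) : H × H)} : Set (H × H)) := by
    rw [Set.disjoint_right]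
    rintro p (rfl | rfl)
    · rintro ⟨-, -, hab⟩
      exact htx (mem_of_invS hSsym hab (by group))
    · rintro ⟨-, -, hab⟩
      exact htx (mem_of_eqS hab (by group))
  rw [Set.ncard_union_eq hdisj (Set.toFinite _) (Set.toFinite _), Set.ncard_pair hne]

lemma ncard_Dset_Km :
    (Dset S (Km t x)).ncard = (Eset S (Kp t x)).ncard := by
  have himg : Dset S (Km t x) = (fun q : H × H => (q.1⁻¹, q.2⁻¹)) '' (Eset S (Kp t x)) := by
    ext ⟨a, b⟩
    simp only [Dset, Eset, Set.mem_image, Set.mem_setOf_eq, Prod.exists, Prod.mk.injEq]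
    constructor
    · rintro ⟨ha, hb, hab⟩
      exact ⟨a⁻¹, b⁻¹, ⟨mem_Km_iff.mp ha, mem_Km_iff.mp hb, mem_of_eqS hab (by group)⟩,
        by simp, by simp⟩
    · rintro ⟨α, β, ⟨hα, hβ, hab⟩, rfl, rfl⟩
      exact ⟨mem_Km_iff.mpr (by simpa using hα), mem_Km_iff.mpr (by simpa using hβ),
        mem_of_eqS hab (by group)⟩
  rw [himg, Set.ncard_image_of_injective]
  intro p q hpq
  simp only [Prod.mk.injEq] at hpq
  exact Prod.ext (inv_injective hpq.1) (inv_injective hpq.2)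

lemma ncard_Eset_Km :
    (Eset S (Km t x)).ncard = (Dset S (Kp t x)).ncard := by
  have himg : Eset S (Km t x) = (fun q : H × H => (q.1⁻¹, q.2⁻¹)) '' (Dset S (Kp t x)) := by
    ext ⟨a, b⟩
    simp only [Dset, Eset, Set.mem_image, Set.mem_setOf_eq, Prod.exists, Prod.mk.injEq]
    constructor
    · rintro ⟨ha, hb, hab⟩
      exact ⟨a⁻¹, b⁻¹, ⟨mem_Km_iff.mp ha, mem_Km_iff.mp hb, mem_of_eqS hab (by group)⟩,
        by simp, by simp⟩
    · rintro ⟨α, β, ⟨hα, hβ, hab⟩, rfl, rfl⟩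
      exact ⟨mem_Km_iff.mpr (by simpa using hα), mem_Km_iff.mpr (by simpa using hβ),
        mem_of_eqS hab (by group)⟩
  rw [himg, Set.ncard_image_of_injective]
  intro p q hpq
  simp only [Prod.mk.injEq] at hpq
  exact Prod.ext (inv_injective hpq.1) (inv_injective hpq.2)

lemma ncard_Kp : (Kp t x : Set H).ncard = 3 := by
  have h1t : (1:H) ≠ t := (fact_t1 hS1 hx htx).symm
  have h1tx : (1:H) ≠ t*x := (fact_tx1 hS1 hx htx).symm
  have httx : t ≠ t*x := by
    intro h
    exact fact_x1 hS1 hx htx (mul_left_cancel (a := t) (by rw [← h, mul_one])).symm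
  rw [Kp, Set.ncard_insert_of_notMem (by simp [h1t, h1tx]) (Set.toFinite _),
    Set.ncard_pair httx]

lemma ncard_Km : (Km t x : Set H).ncard = 3 := by
  have himg : Km t x = (fun a : H => a⁻¹) '' (Kp t x) := by
    ext a
    rw [mem_Km_iff]
    constructor
    · intro h; exact ⟨a⁻¹, h, by simp⟩
    · rintro ⟨b, hb, rfl⟩; simpa using hb
  rw [himg, Set.ncard_image_of_injective _ inv_injective]
  exact ncard_Kp hS1 hSsym hx htx

end Count


section ZModFacts

lemma zmod_one_ne_zero {m : ℕ} (hm : 2 ≤ m) : (1 : ZMod m) ≠ 0 := by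
  intro h
  have h2 : ((1:ℕ) : ZMod m) = 0 := by exact_mod_cast h
  rw [ZMod.natCast_eq_zero_iff] at h2
  have := Nat.le_of_dvd one_pos h2
  omega

lemma zmod_two_ne_zero {m : ℕ} (hm : 3 ≤ m) : (2 : ZMod m) ≠ 0 := by
  intro h
  have h2 : ((2:ℕ) : ZMod m) = 0 := by exact_mod_cast h
  rw [ZMod.natCast_eq_zero_iff] at h2
  have := Nat.le_of_dvd two_pos h2
  omega

lemma zmod_three_ne_zero {m : ℕ} (hm : 4 ≤ m) : (3 : ZMod m) ≠ 0 := by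
  intro h
  have h2 : ((3:ℕ) : ZMod m) = 0 := by exact_mod_cast h
  rw [ZMod.natCast_eq_zero_iff] at h2
  have := Nat.le_of_dvd three_pos h2
  omega

end ZModFacts

section Graph

/-- crossing sets along the cycle of layers -/
def KK (t x : H) {m : ℕ} (i : ZMod m) : Set H :=
  if i = 0 then Kp t x else Km t x

/-- adjacency for the layered graph -/
def adjD (S : Set H) (t x : H) {m : ℕ} (p q : H × ZMod m) : Prop :=
  (p.2 = q.2 ∧ p.1⁻¹ * q.1 ∈ S) ∨
  (q.2 = p.2 + 1 ∧ p.1⁻¹ * q.1 ∈ KK t x p.2) ∨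
  (p.2 = q.2 + 1 ∧ q.1⁻¹ * p.1 ∈ KK t x q.2)

variable {m : ℕ}

lemma adjD_symm (hSsym : ∀ s ∈ S, s⁻¹ ∈ S) {p q : H × ZMod m}
    (h : adjD S t x p q) : adjD S t x q p := by
  rcases h with ⟨h1, h2⟩ | ⟨h1, h2⟩ | ⟨h1, h2⟩
  · exact Or.inl ⟨h1.symm, by
      have := hSsym _ h2
      simpa [mul_inv_rev] using this⟩
  · exact Or.inr (Or.inr ⟨h1, h2⟩)
  · exact Or.inr (Or.inl ⟨h1, h2⟩)

lemma adjD_irrefl (hS1 : (1:H) ∉ S) (hm : 2 ≤ m) (p : H × ZMod m) :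
    ¬ adjD S t x p p := by
  rintro (⟨-, h2⟩ | ⟨h1, -⟩ | ⟨h1, -⟩)
  · rw [inv_mul_cancel] at h2; exact hS1 h2
  · exact zmod_one_ne_zero hm (by linear_combination -h1)
  · exact zmod_one_ne_zero hm (by linear_combination -h1)

lemma adjD_layer {p q : H × ZMod m} (h : adjD S t x p q) :
    q.2 = p.2 ∨ q.2 = p.2 + 1 ∨ p.2 = q.2 + 1 := by
  rcases h with ⟨h1, -⟩ | ⟨h1, -⟩ | ⟨h1, -⟩
  · exact Or.inl h1.symm
  · exact Or.inr (Or.inl h1)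
  · exact Or.inr (Or.inr h1)

lemma adjD_same (hm : 2 ≤ m) {i : ZMod m} {a b : H} :
    adjD S t x (a, i) (b, i) ↔ a⁻¹ * b ∈ S := by
  constructor
  · rintro (⟨-, h2⟩ | ⟨h1, -⟩ | ⟨h1, -⟩)
    · exact h2
    · exact absurd (by linear_combination -h1) (zmod_one_ne_zero hm)
    · exact absurd (by linear_combination -h1) (zmod_one_ne_zero hm)
  · intro h; exact Or.inl ⟨rfl, h⟩

lemma adjD_up (hm : 3 ≤ m) {i : ZMod m} {a b : H} :
    adjD S t x (a, i) (b, i+1) ↔ a⁻¹ * b ∈ KK t x i := by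
  constructor
  · rintro (⟨h1, -⟩ | ⟨-, h2⟩ | ⟨h1, -⟩)
    · exact absurd (by linear_combination -h1) (zmod_one_ne_zero (by omega))
    · exact h2
    · exact absurd (by linear_combination -h1) (zmod_two_ne_zero hm)
  · intro h; exact Or.inr (Or.inl ⟨rfl, h⟩)

lemma adjD_down (hm : 3 ≤ m) {i : ZMod m} {a b : H} :
    adjD S t x (a, i) (b, i-1) ↔ b⁻¹ * a ∈ KK t x (i-1) := by
  constructor
  · rintro (⟨h1, -⟩ | ⟨h1, -⟩ | ⟨-, h2⟩)
    · exact absurd (by linear_combination h1) (zmod_one_ne_zero (by omega))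
    · exact absurd (by linear_combination -h1) (zmod_two_ne_zero hm)
    · exact h2
  · intro h
    refine Or.inr (Or.inr ⟨by ring, ?_⟩)
    exact h

/-- diagonal left translations preserve adjacency -/
lemma adjD_diag {g : H} {p q : H × ZMod m} :
    adjD S t x (g * p.1, p.2) (g * q.1, q.2) ↔ adjD S t x p q := by
  have e : ∀ a b : H, (g * a)⁻¹ * (g * b) = a⁻¹ * b := by intro a b; group
  simp only [adjD, e]

end Graph


section Tri
variable [Finite H]
variable {m : ℕ}

/-- triangles (ordered pairs of common neighbours that are adjacent) at a vertex -/
def triD (S : Set H) (t x : H) {m : ℕ} (v : H × ZMod m) :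
    Set ((H × ZMod m) × (H × ZMod m)) :=
  {q | adjD S t x v q.1 ∧ adjD S t x v q.2 ∧ adjD S t x q.1 q.2}

noncomputable def phiD (S : Set H) (t x : H) {m : ℕ} (v : H × ZMod m) : ℕ :=
  (triD S t x v).ncard

lemma phiD_invariant (σ : (H × ZMod m) ≃ (H × ZMod m))
    (hσ : ∀ p q : H × ZMod m, adjD S t x (σ p) (σ q) ↔ adjD S t x p q)
    (v : H × ZMod m) : phiD S t x (σ v) = phiD S t x v := by
  have hinj : Function.Injective (fun q : (H × ZMod m) × (H × ZMod m) => (σ q.1, σ q.2)) := by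
    intro p q hpq
    simp only [Prod.mk.injEq] at hpq
    exact Prod.ext (σ.injective hpq.1) (σ.injective hpq.2)
  have himg : triD S t x (σ v) = (fun q : _ × _ => (σ q.1, σ q.2)) '' triD S t x v := by
    ext q
    constructor
    · intro hq
      refine ⟨(σ.symm q.1, σ.symm q.2), ⟨?_, ?_, ?_⟩, ?_⟩
      · rw [← hσ v (σ.symm q.1)]; simpa using hq.1
      · rw [← hσ v (σ.symm q.2)]; simpa using hq.2.1
      · rw [← hσ (σ.symm q.1) (σ.symm q.2)]; simpa using hq.2.2
      · simp
    · rintro ⟨w, hw, rfl⟩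
      exact ⟨(hσ v w.1).mpr hw.1, (hσ v w.2).mpr hw.2.1, (hσ w.1 w.2).mpr hw.2.2⟩
  rw [phiD, himg, Set.ncard_image_of_injective _ hinj]
  rfl

/-- the diagonal translation as an equivalence -/
def diagT (g : H) {m : ℕ} : (H × ZMod m) ≃ (H × ZMod m) where
  toFun p := (g * p.1, p.2)
  invFun p := (g⁻¹ * p.1, p.2)
  left_inv p := by simp [← mul_assoc]
  right_inv p := by simp [← mul_assoc]

lemma phiD_layer_const (g : H) (i : ZMod m) :
    phiD S t x ((g, i) : H × ZMod m) = phiD S t x ((1 : H), i) := by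
  have h := phiD_invariant (S := S) (t := t) (x := x) (diagT g)
    (fun p q => adjD_diag) ((1 : H), i)
  simpa [diagT] using h

/-- generic: counting a class of pairs with fixed layers -/
lemma ncard_pairset (j k : ZMod m) (P Q : H → Prop) (R : H → H → Prop) :
    {q : (H × ZMod m) × (H × ZMod m) |
        (q.1.2 = j ∧ P q.1.1) ∧ (q.2.2 = k ∧ Q q.2.1) ∧ R q.1.1 q.2.1}.ncard
      = {w : H × H | P w.1 ∧ Q w.2 ∧ R w.1 w.2}.ncard := by
  have hinj : Function.Injective (fun w : H × H => (((w.1, j), (w.2, k)) :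
      (H × ZMod m) × (H × ZMod m))) := by
    intro w w' h
    simp only [Prod.mk.injEq] at h
    exact Prod.ext h.1.1 h.2.1
  have himg : {q : (H × ZMod m) × (H × ZMod m) |
        (q.1.2 = j ∧ P q.1.1) ∧ (q.2.2 = k ∧ Q q.2.1) ∧ R q.1.1 q.2.1}
      = (fun w : H × H => ((w.1, j), (w.2, k))) ''
        {w : H × H | P w.1 ∧ Q w.2 ∧ R w.1 w.2} := by
    ext ⟨⟨a, ia⟩, ⟨b, ib⟩⟩
    constructor
    · rintro ⟨⟨h1, hP⟩, ⟨h2, hQ⟩, hR⟩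
      simp only at h1 h2 hP hQ hR
      subst h1; subst h2
      exact ⟨(a, b), ⟨hP, hQ, hR⟩, rfl⟩
    · rintro ⟨⟨a', b'⟩, ⟨hP, hQ, hR⟩, heq⟩
      simp only [Prod.mk.injEq] at heq
      obtain ⟨⟨e1, e2⟩, e3, e4⟩ := heq
      subst e1; subst e2; subst e3; subst e4
      exact ⟨⟨rfl, hP⟩, ⟨rfl, hQ⟩, hR⟩
  rw [himg, Set.ncard_image_of_injective _ hinj]

/-- class of triangles with prescribed layers -/
def Cls (S : Set H) (t x : H) {m : ℕ} (v : H × ZMod m) (j k : ZMod m) :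
    Set ((H × ZMod m) × (H × ZMod m)) :=
  {q | q ∈ triD S t x v ∧ q.1.2 = j ∧ q.2.2 = k}

lemma Cls_disj_fst {v : H × ZMod m} {j k j' k' : ZMod m} (h : j ≠ j') :
    Disjoint (Cls S t x v j k) (Cls S t x v j' k') := by
  rw [Set.disjoint_left]
  rintro q ⟨-, rfl, -⟩ ⟨-, h2, -⟩
  exact h h2

lemma Cls_disj_snd {v : H × ZMod m} {j k j' k' : ZMod m} (h : k ≠ k') :
    Disjoint (Cls S t x v j k) (Cls S t x v j' k') := by
  rw [Set.disjoint_left]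
  rintro q ⟨-, -, rfl⟩ ⟨-, -, h2⟩
  exact h h2

lemma Cls_swap (hSsym : ∀ s ∈ S, s⁻¹ ∈ S) (v : H × ZMod m) (j k : ZMod m) :
    (Cls S t x v j k).ncard = (Cls S t x v k j).ncard := by
  have hinj : Function.Injective
      (fun q : (H × ZMod m) × (H × ZMod m) => (q.2, q.1)) := by
    intro p q hpq
    simp only [Prod.mk.injEq] at hpq
    exact Prod.ext hpq.2 hpq.1
  have himg : Cls S t x v k j = (fun q : (H × ZMod m) × (H × ZMod m) => (q.2, q.1)) ''
      Cls S t x v j k := by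
    ext q
    constructor
    · rintro ⟨⟨h1, h2, h3⟩, h4, h5⟩
      exact ⟨(q.2, q.1), ⟨⟨h2, h1, adjD_symm hSsym h3⟩, h5, h4⟩, rfl⟩
    · rintro ⟨w, ⟨⟨h1, h2, h3⟩, h4, h5⟩, rfl⟩
      exact ⟨⟨h2, h1, adjD_symm hSsym h3⟩, h5, h4⟩
  rw [himg, Set.ncard_image_of_injective _ hinj]

lemma ncard_union3 {α : Type*} [Finite α] {A B C : Set α}
    (hAB : Disjoint A B) (hAC : Disjoint A C) (hBC : Disjoint B C) :
    (A ∪ B ∪ C).ncard = A.ncard + B.ncard + C.ncard := by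
  rw [Set.ncard_union_eq (by
      rw [Set.disjoint_union_left]; exact ⟨hAC, hBC⟩) (Set.toFinite _) (Set.toFinite _),
    Set.ncard_union_eq hAB (Set.toFinite _) (Set.toFinite _)]

end Tri


section GsetLemmas
variable [Finite H]

lemma gset1 (W : Set H) :
    {w : H × H | w.1 ∈ S ∧ w.2 ∈ W ∧ w.1⁻¹ * w.2 ∈ W}.ncard = (Dset S W).ncard := by
  have hinj : Function.Injective (fun w : H × H => (w.2, w.1⁻¹ * w.2)) := by
    intro w w' h
    simp only [Prod.mk.injEq] at h
    obtain ⟨h1, h2⟩ := h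
    rw [← h1] at h2
    exact Prod.ext (inv_injective (mul_right_cancel h2)) h1
  have himg : Dset S W = (fun w : H × H => (w.2, w.1⁻¹ * w.2)) ''
      {w : H × H | w.1 ∈ S ∧ w.2 ∈ W ∧ w.1⁻¹ * w.2 ∈ W} := by
    ext ⟨k1, k2⟩
    constructor
    · rintro ⟨h1, h2, h3⟩
      have e : (k1 * k2⁻¹)⁻¹ * k1 = k2 := by group
      exact ⟨(k1 * k2⁻¹, k1), ⟨h3, h1, by rw [e]; exact h2⟩, Prod.ext rfl e⟩
    · rintro ⟨⟨a, b⟩, ⟨h1, h2, h3⟩, heq⟩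
      simp only [Prod.mk.injEq] at heq
      obtain ⟨rfl, rfl⟩ := heq
      refine ⟨h2, h3, ?_⟩
      have e : b * (a⁻¹ * b)⁻¹ = a := by group
      rw [e]; exact h1
  rw [himg, Set.ncard_image_of_injective _ hinj]

lemma gset2 (W : Set H) :
    {w : H × H | w.1 ∈ W ∧ w.2 ∈ S ∧ w.2⁻¹ * w.1 ∈ W}.ncard = (Dset S W).ncard := by
  have hinj : Function.Injective (fun w : H × H => (w.1, w.2⁻¹ * w.1)) := by
    intro w w' h
    simp only [Prod.mk.injEq] at h
    obtain ⟨h1, h2⟩ := h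
    rw [← h1] at h2
    exact Prod.ext h1 (inv_injective (mul_right_cancel h2))
  have himg : Dset S W = (fun w : H × H => (w.1, w.2⁻¹ * w.1)) ''
      {w : H × H | w.1 ∈ W ∧ w.2 ∈ S ∧ w.2⁻¹ * w.1 ∈ W} := by
    ext ⟨k1, k2⟩
    constructor
    · rintro ⟨h1, h2, h3⟩
      have e : (k1 * k2⁻¹)⁻¹ * k1 = k2 := by group
      exact ⟨(k1, k1 * k2⁻¹), ⟨h1, h3, by rw [e]; exact h2⟩, Prod.ext rfl e⟩
    · rintro ⟨⟨a, b⟩, ⟨h1, h2, h3⟩, heq⟩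
      simp only [Prod.mk.injEq] at heq
      obtain ⟨rfl, rfl⟩ := heq
      refine ⟨h1, h3, ?_⟩
      have e : a * (b⁻¹ * a)⁻¹ = b := by group
      rw [e]; exact h2
  rw [himg, Set.ncard_image_of_injective _ hinj]

lemma gset4 (W : Set H) :
    {w : H × H | w.1 ∈ S ∧ w.2⁻¹ ∈ W ∧ w.2⁻¹ * w.1 ∈ W}.ncard = (Eset S W).ncard := by
  have hinj : Function.Injective (fun w : H × H => (w.2⁻¹, w.2⁻¹ * w.1)) := by
    intro w w' h
    simp only [Prod.mk.injEq] at h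
    obtain ⟨h1, h2⟩ := h
    rw [h1] at h2
    exact Prod.ext (mul_left_cancel h2) (inv_injective h1)
  have himg : Eset S W = (fun w : H × H => (w.2⁻¹, w.2⁻¹ * w.1)) ''
      {w : H × H | w.1 ∈ S ∧ w.2⁻¹ ∈ W ∧ w.2⁻¹ * w.1 ∈ W} := by
    ext ⟨k1, k2⟩
    constructor
    · rintro ⟨h1, h2, h3⟩
      refine ⟨(k1⁻¹ * k2, k1⁻¹), ⟨h3, by simpa using h1, ?_⟩, ?_⟩
      · have e : (k1⁻¹)⁻¹ * (k1⁻¹ * k2) = k2 := by group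
        rw [e]; exact h2
      · simp only [Prod.mk.injEq]
        constructor
        · group
        · have e : (k1⁻¹)⁻¹ * (k1⁻¹ * k2) = k2 := by group
          exact e
    · rintro ⟨⟨a, b⟩, ⟨h1, h2, h3⟩, heq⟩
      simp only [Prod.mk.injEq] at heq
      obtain ⟨rfl, rfl⟩ := heq
      refine ⟨h2, h3, ?_⟩
      have e : (b⁻¹)⁻¹ * (b⁻¹ * a) = a := by group
      rw [e]; exact h1
  rw [himg, Set.ncard_image_of_injective _ hinj]

lemma gset5 (W : Set H) :
    {w : H × H | w.1⁻¹ ∈ W ∧ w.2 ∈ S ∧ w.1⁻¹ * w.2 ∈ W}.ncard = (Eset S W).ncard := by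
  have hinj : Function.Injective (fun w : H × H => (w.1⁻¹, w.1⁻¹ * w.2)) := by
    intro w w' h
    simp only [Prod.mk.injEq] at h
    obtain ⟨h1, h2⟩ := h
    rw [h1] at h2
    exact Prod.ext (inv_injective h1) (mul_left_cancel h2)
  have himg : Eset S W = (fun w : H × H => (w.1⁻¹, w.1⁻¹ * w.2)) ''
      {w : H × H | w.1⁻¹ ∈ W ∧ w.2 ∈ S ∧ w.1⁻¹ * w.2 ∈ W} := by
    ext ⟨k1, k2⟩
    constructor
    · rintro ⟨h1, h2, h3⟩
      refine ⟨(k1⁻¹, k1⁻¹ * k2), ⟨by simpa using h1, h3, ?_⟩, ?_⟩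
      · have e : (k1⁻¹)⁻¹ * (k1⁻¹ * k2) = k2 := by group
        rw [e]; exact h2
      · simp only [Prod.mk.injEq]
        refine ⟨by group, ?_⟩
        have e : (k1⁻¹)⁻¹ * (k1⁻¹ * k2) = k2 := by group
        exact e
    · rintro ⟨⟨a, b⟩, ⟨h1, h2, h3⟩, heq⟩
      simp only [Prod.mk.injEq] at heq
      obtain ⟨rfl, rfl⟩ := heq
      refine ⟨h1, h3, ?_⟩
      have e : (a⁻¹)⁻¹ * (a⁻¹ * b) = b := by group
      rw [e]; exact h2
  rw [himg, Set.ncard_image_of_injective _ hinj]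

lemma gset6 (W : Set H) :
    {w : H × H | w.1⁻¹ ∈ W ∧ w.2⁻¹ ∈ W ∧ w.1⁻¹ * w.2 ∈ S}.ncard = (Dset S W).ncard := by
  have hinj : Function.Injective (fun w : H × H => (w.1⁻¹, w.2⁻¹)) := by
    intro w w' h
    simp only [Prod.mk.injEq] at h
    exact Prod.ext (inv_injective h.1) (inv_injective h.2)
  have himg : Dset S W = (fun w : H × H => (w.1⁻¹, w.2⁻¹)) ''
      {w : H × H | w.1⁻¹ ∈ W ∧ w.2⁻¹ ∈ W ∧ w.1⁻¹ * w.2 ∈ S} := by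
    ext ⟨k1, k2⟩
    constructor
    · rintro ⟨h1, h2, h3⟩
      refine ⟨(k1⁻¹, k2⁻¹), ⟨by simpa using h1, by simpa using h2, ?_⟩, by simp⟩
      have e : (k1⁻¹)⁻¹ * k2⁻¹ = k1 * k2⁻¹ := by group
      rw [e]; exact h3
    · rintro ⟨⟨a, b⟩, ⟨h1, h2, h3⟩, heq⟩
      simp only [Prod.mk.injEq] at heq
      obtain ⟨rfl, rfl⟩ := heq
      refine ⟨h1, h2, ?_⟩
      have e : a⁻¹ * (b⁻¹)⁻¹ = a⁻¹ * b := by group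
      rw [e]; exact h3
  rw [himg, Set.ncard_image_of_injective _ hinj]

end GsetLemmas


section ClsEval
variable [Finite H]
variable {m : ℕ}

lemma adjD_down2 (hm : 3 ≤ m) {j : ZMod m} {a b : H} :
    adjD S t x (a, j+1) (b, j) ↔ b⁻¹ * a ∈ KK t x j := by
  have h := adjD_down (S := S) (t := t) (x := x) (i := j+1) (a := a) (b := b) hm
  rw [show (j + 1 - 1 : ZMod m) = j from by ring] at h
  exact h

lemma adjD_up2 (hm : 3 ≤ m) {j : ZMod m} {a b : H} :
    adjD S t x (a, j-1) (b, j) ↔ a⁻¹ * b ∈ KK t x (j-1) := by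
  have h := adjD_up (S := S) (t := t) (x := x) (i := j-1) (a := a) (b := b) hm
  rw [show (j - 1 + 1 : ZMod m) = j from by ring] at h
  exact h

lemma Cls_ii_eval (hm : 3 ≤ m) (i : ZMod m) :
    (Cls S t x ((1:H), i) i i).ncard = (Eset S S).ncard := by
  have hset : Cls S t x ((1:H), i) i i =
      {q : (H × ZMod m) × (H × ZMod m) |
        (q.1.2 = i ∧ q.1.1 ∈ S) ∧ (q.2.2 = i ∧ q.2.1 ∈ S) ∧ q.1.1⁻¹ * q.2.1 ∈ S} := by
    ext ⟨⟨a, ja⟩, ⟨b, jb⟩⟩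
    simp only [Cls, triD, Set.mem_setOf_eq]
    constructor
    · rintro ⟨⟨h1, h2, h3⟩, rfl, rfl⟩
      exact ⟨⟨rfl, by simpa using (adjD_same (m := m) (by omega)).mp h1⟩,
        ⟨rfl, by simpa using (adjD_same (m := m) (by omega)).mp h2⟩,
        (adjD_same (by omega)).mp h3⟩
    · rintro ⟨⟨rfl, h1⟩, ⟨rfl, h2⟩, h3⟩
      exact ⟨⟨(adjD_same (by omega)).mpr (by simpa using h1),
        (adjD_same (by omega)).mpr (by simpa using h2),
        (adjD_same (by omega)).mpr h3⟩, rfl, rfl⟩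
  rw [hset]
  exact ncard_pairset i i (fun a => a ∈ S) (fun b => b ∈ S) (fun a b => a⁻¹ * b ∈ S)

lemma Cls_i_up_eval (hm : 3 ≤ m) (i : ZMod m) :
    (Cls S t x ((1:H), i) i (i+1)).ncard = (Dset S (KK t x i)).ncard := by
  have hset : Cls S t x ((1:H), i) i (i+1) =
      {q : (H × ZMod m) × (H × ZMod m) |
        (q.1.2 = i ∧ q.1.1 ∈ S) ∧ (q.2.2 = i+1 ∧ q.2.1 ∈ KK t x i) ∧
          q.1.1⁻¹ * q.2.1 ∈ KK t x i} := by
    ext ⟨⟨a, ja⟩, ⟨b, jb⟩⟩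
    simp only [Cls, triD, Set.mem_setOf_eq]
    constructor
    · rintro ⟨⟨h1, h2, h3⟩, rfl, rfl⟩
      exact ⟨⟨rfl, by simpa using (adjD_same (m := m) (by omega)).mp h1⟩,
        ⟨rfl, by simpa using (adjD_up hm).mp h2⟩, (adjD_up hm).mp h3⟩
    · rintro ⟨⟨rfl, h1⟩, ⟨rfl, h2⟩, h3⟩
      exact ⟨⟨(adjD_same (by omega)).mpr (by simpa using h1),
        (adjD_up hm).mpr (by simpa using h2), (adjD_up hm).mpr h3⟩, rfl, rfl⟩
  rw [hset]
  exact (ncard_pairset i (i+1) (fun a => a ∈ S) (fun b => b ∈ KK t x i)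
    (fun a b => a⁻¹ * b ∈ KK t x i)).trans (gset1 _)

lemma Cls_up_i_eval (hm : 3 ≤ m) (i : ZMod m) :
    (Cls S t x ((1:H), i) (i+1) i).ncard = (Dset S (KK t x i)).ncard := by
  have hset : Cls S t x ((1:H), i) (i+1) i =
      {q : (H × ZMod m) × (H × ZMod m) |
        (q.1.2 = i+1 ∧ q.1.1 ∈ KK t x i) ∧ (q.2.2 = i ∧ q.2.1 ∈ S) ∧
          q.2.1⁻¹ * q.1.1 ∈ KK t x i} := by
    ext ⟨⟨a, ja⟩, ⟨b, jb⟩⟩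
    simp only [Cls, triD, Set.mem_setOf_eq]
    constructor
    · rintro ⟨⟨h1, h2, h3⟩, rfl, rfl⟩
      exact ⟨⟨rfl, by simpa using (adjD_up hm).mp h1⟩,
        ⟨rfl, by simpa using (adjD_same (m := m) (by omega)).mp h2⟩,
        (adjD_down2 hm).mp h3⟩
    · rintro ⟨⟨rfl, h1⟩, ⟨rfl, h2⟩, h3⟩
      exact ⟨⟨(adjD_up hm).mpr (by simpa using h1),
        (adjD_same (by omega)).mpr (by simpa using h2), (adjD_down2 hm).mpr h3⟩, rfl, rfl⟩
  rw [hset]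
  exact (ncard_pairset (i+1) i (fun a => a ∈ KK t x i) (fun b => b ∈ S)
    (fun a b => b⁻¹ * a ∈ KK t x i)).trans (gset2 _)

lemma Cls_up_up_eval (hm : 3 ≤ m) (i : ZMod m) :
    (Cls S t x ((1:H), i) (i+1) (i+1)).ncard = (Eset S (KK t x i)).ncard := by
  have hset : Cls S t x ((1:H), i) (i+1) (i+1) =
      {q : (H × ZMod m) × (H × ZMod m) |
        (q.1.2 = i+1 ∧ q.1.1 ∈ KK t x i) ∧ (q.2.2 = i+1 ∧ q.2.1 ∈ KK t x i) ∧
          q.1.1⁻¹ * q.2.1 ∈ S} := by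
    ext ⟨⟨a, ja⟩, ⟨b, jb⟩⟩
    simp only [Cls, triD, Set.mem_setOf_eq]
    constructor
    · rintro ⟨⟨h1, h2, h3⟩, rfl, rfl⟩
      exact ⟨⟨rfl, by simpa using (adjD_up hm).mp h1⟩,
        ⟨rfl, by simpa using (adjD_up hm).mp h2⟩,
        (adjD_same (m := m) (by omega)).mp h3⟩
    · rintro ⟨⟨rfl, h1⟩, ⟨rfl, h2⟩, h3⟩
      exact ⟨⟨(adjD_up hm).mpr (by simpa using h1),
        (adjD_up hm).mpr (by simpa using h2), (adjD_same (by omega)).mpr h3⟩, rfl, rfl⟩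
  rw [hset]
  exact ncard_pairset (i+1) (i+1) (fun a => a ∈ KK t x i) (fun b => b ∈ KK t x i)
    (fun a b => a⁻¹ * b ∈ S)

lemma Cls_i_dn_eval (hm : 3 ≤ m) (i : ZMod m) :
    (Cls S t x ((1:H), i) i (i-1)).ncard = (Eset S (KK t x (i-1))).ncard := by
  have hset : Cls S t x ((1:H), i) i (i-1) =
      {q : (H × ZMod m) × (H × ZMod m) |
        (q.1.2 = i ∧ q.1.1 ∈ S) ∧ (q.2.2 = i-1 ∧ q.2.1⁻¹ ∈ KK t x (i-1)) ∧
          q.2.1⁻¹ * q.1.1 ∈ KK t x (i-1)} := by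
    ext ⟨⟨a, ja⟩, ⟨b, jb⟩⟩
    simp only [Cls, triD, Set.mem_setOf_eq]
    constructor
    · rintro ⟨⟨h1, h2, h3⟩, rfl, rfl⟩
      exact ⟨⟨rfl, by simpa using (adjD_same (m := m) (by omega)).mp h1⟩,
        ⟨rfl, by simpa using (adjD_down hm).mp h2⟩, (adjD_down hm).mp h3⟩
    · rintro ⟨⟨rfl, h1⟩, ⟨rfl, h2⟩, h3⟩
      exact ⟨⟨(adjD_same (by omega)).mpr (by simpa using h1),
        (adjD_down hm).mpr (by simpa using h2), (adjD_down hm).mpr h3⟩, rfl, rfl⟩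
  rw [hset]
  exact (ncard_pairset i (i-1) (fun a => a ∈ S) (fun b => b⁻¹ ∈ KK t x (i-1))
    (fun a b => b⁻¹ * a ∈ KK t x (i-1))).trans (gset4 _)

lemma Cls_dn_i_eval (hm : 3 ≤ m) (i : ZMod m) :
    (Cls S t x ((1:H), i) (i-1) i).ncard = (Eset S (KK t x (i-1))).ncard := by
  have hset : Cls S t x ((1:H), i) (i-1) i =
      {q : (H × ZMod m) × (H × ZMod m) |
        (q.1.2 = i-1 ∧ q.1.1⁻¹ ∈ KK t x (i-1)) ∧ (q.2.2 = i ∧ q.2.1 ∈ S) ∧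
          q.1.1⁻¹ * q.2.1 ∈ KK t x (i-1)} := by
    ext ⟨⟨a, ja⟩, ⟨b, jb⟩⟩
    simp only [Cls, triD, Set.mem_setOf_eq]
    constructor
    · rintro ⟨⟨h1, h2, h3⟩, rfl, rfl⟩
      exact ⟨⟨rfl, by simpa using (adjD_down hm).mp h1⟩,
        ⟨rfl, by simpa using (adjD_same (m := m) (by omega)).mp h2⟩,
        (adjD_up2 hm).mp h3⟩
    · rintro ⟨⟨rfl, h1⟩, ⟨rfl, h2⟩, h3⟩
      exact ⟨⟨(adjD_down hm).mpr (by simpa using h1),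
        (adjD_same (by omega)).mpr (by simpa using h2), (adjD_up2 hm).mpr h3⟩, rfl, rfl⟩
  rw [hset]
  exact (ncard_pairset (i-1) i (fun a => a⁻¹ ∈ KK t x (i-1)) (fun b => b ∈ S)
    (fun a b => a⁻¹ * b ∈ KK t x (i-1))).trans (gset5 _)

lemma Cls_dn_dn_eval (hm : 3 ≤ m) (i : ZMod m) :
    (Cls S t x ((1:H), i) (i-1) (i-1)).ncard = (Dset S (KK t x (i-1))).ncard := by
  have hset : Cls S t x ((1:H), i) (i-1) (i-1) =
      {q : (H × ZMod m) × (H × ZMod m) |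
        (q.1.2 = i-1 ∧ q.1.1⁻¹ ∈ KK t x (i-1)) ∧ (q.2.2 = i-1 ∧ q.2.1⁻¹ ∈ KK t x (i-1)) ∧
          q.1.1⁻¹ * q.2.1 ∈ S} := by
    ext ⟨⟨a, ja⟩, ⟨b, jb⟩⟩
    simp only [Cls, triD, Set.mem_setOf_eq]
    constructor
    · rintro ⟨⟨h1, h2, h3⟩, rfl, rfl⟩
      exact ⟨⟨rfl, by simpa using (adjD_down hm).mp h1⟩,
        ⟨rfl, by simpa using (adjD_down hm).mp h2⟩,
        (adjD_same (m := m) (by omega)).mp h3⟩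
    · rintro ⟨⟨rfl, h1⟩, ⟨rfl, h2⟩, h3⟩
      exact ⟨⟨(adjD_down hm).mpr (by simpa using h1),
        (adjD_down hm).mpr (by simpa using h2), (adjD_same (by omega)).mpr h3⟩, rfl, rfl⟩
  rw [hset]
  exact (ncard_pairset (i-1) (i-1) (fun a => a⁻¹ ∈ KK t x (i-1)) (fun b => b⁻¹ ∈ KK t x (i-1))
    (fun a b => a⁻¹ * b ∈ S)).trans (gset6 _)

end ClsEval


section Formula
variable [Finite H]
variable {m : ℕ}

lemma zne1 (hm : 3 ≤ m) {i : ZMod m} : i ≠ i + 1 :=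
  fun h => zmod_one_ne_zero (m := m) (by omega) (by linear_combination -h)
lemma zne2 (hm : 3 ≤ m) {i : ZMod m} : i ≠ i - 1 :=
  fun h => zmod_one_ne_zero (m := m) (by omega) (by linear_combination h)
lemma zne3 (hm : 3 ≤ m) {i : ZMod m} : i + 1 ≠ i - 1 :=
  fun h => zmod_two_ne_zero (m := m) hm (by linear_combination h)

lemma triD_decomp (hm : 3 ≤ m) (i : ZMod m) :
    triD S t x ((1:H), i) =
      (Cls S t x ((1:H),i) i i ∪ Cls S t x ((1:H),i) i (i+1) ∪ Cls S t x ((1:H),i) i (i-1)) ∪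
      (Cls S t x ((1:H),i) (i+1) i ∪ Cls S t x ((1:H),i) (i+1) (i+1) ∪
        Cls S t x ((1:H),i) (i+1) (i-1)) ∪
      (Cls S t x ((1:H),i) (i-1) i ∪ Cls S t x ((1:H),i) (i-1) (i+1) ∪
        Cls S t x ((1:H),i) (i-1) (i-1)) := by
  ext q
  constructor
  · intro hq
    have h1 : q.1.2 = i ∨ q.1.2 = i + 1 ∨ q.1.2 = i - 1 := by
      rcases adjD_layer hq.1 with h|h|h
      exacts [Or.inl h, Or.inr (Or.inl h), Or.inr (Or.inr (by linear_combination -h))]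
    have h2 : q.2.2 = i ∨ q.2.2 = i + 1 ∨ q.2.2 = i - 1 := by
      rcases adjD_layer hq.2.1 with h|h|h
      exacts [Or.inl h, Or.inr (Or.inl h), Or.inr (Or.inr (by linear_combination -h))]
    rcases h1 with h1|h1|h1 <;> rcases h2 with h2|h2|h2
    · exact Or.inl (Or.inl (Or.inl (Or.inl ⟨hq, h1, h2⟩)))
    · exact Or.inl (Or.inl (Or.inl (Or.inr ⟨hq, h1, h2⟩)))
    · exact Or.inl (Or.inl (Or.inr ⟨hq, h1, h2⟩))
    · exact Or.inl (Or.inr (Or.inl (Or.inl ⟨hq, h1, h2⟩)))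
    · exact Or.inl (Or.inr (Or.inl (Or.inr ⟨hq, h1, h2⟩)))
    · exact Or.inl (Or.inr (Or.inr ⟨hq, h1, h2⟩))
    · exact Or.inr (Or.inl (Or.inl ⟨hq, h1, h2⟩))
    · exact Or.inr (Or.inl (Or.inr ⟨hq, h1, h2⟩))
    · exact Or.inr (Or.inr ⟨hq, h1, h2⟩)
  · rintro ((((h|h)|h)|((h|h)|h))|((h|h)|h)) <;> exact h.1

lemma rows_disjoint {v : H × ZMod m} {j j' : ZMod m} (h : j ≠ j')
    (k1 k2 k3 k1' k2' k3' : ZMod m) :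
    Disjoint (Cls S t x v j k1 ∪ Cls S t x v j k2 ∪ Cls S t x v j k3)
      (Cls S t x v j' k1' ∪ Cls S t x v j' k2' ∪ Cls S t x v j' k3') := by
  simp only [Set.disjoint_union_left, Set.disjoint_union_right]
  and_intros <;> exact Cls_disj_fst h

lemma phiD_formula (hSsym : ∀ s ∈ S, s⁻¹ ∈ S) (hm : 3 ≤ m) (i : ZMod m) :
    phiD S t x ((1:H), i) =
      (Eset S S).ncard + 2 * (Dset S (KK t x i)).ncard + (Eset S (KK t x i)).ncard
        + 2 * (Eset S (KK t x (i-1))).ncard + (Dset S (KK t x (i-1))).ncard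
        + 2 * (Cls S t x ((1:H),i) (i+1) (i-1)).ncard := by
  haveI : NeZero m := ⟨by omega⟩
  have e1 : i ≠ i + 1 := zne1 hm
  have e2 : i ≠ i - 1 := zne2 hm
  have e3 : i + 1 ≠ i - 1 := zne3 hm
  rw [phiD, triD_decomp hm i,
    ncard_union3 (rows_disjoint e1 _ _ _ _ _ _) (rows_disjoint e2 _ _ _ _ _ _)
      (rows_disjoint e3 _ _ _ _ _ _),
    ncard_union3 (Cls_disj_snd e1) (Cls_disj_snd e2) (Cls_disj_snd e3),
    ncard_union3 (Cls_disj_snd e1) (Cls_disj_snd e2) (Cls_disj_snd e3),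
    ncard_union3 (Cls_disj_snd e1) (Cls_disj_snd e2) (Cls_disj_snd e3)]
  rw [Cls_ii_eval hm, Cls_i_up_eval hm, Cls_up_i_eval hm, Cls_up_up_eval hm,
    Cls_i_dn_eval hm, Cls_dn_i_eval hm, Cls_dn_dn_eval hm,
    Cls_swap hSsym ((1:H), i) (i-1) (i+1)]
  ring

end Formula


section Mcls
variable [Finite H]
variable {m : ℕ}

lemma mset_a (W : Set H) :
    {w : H × H | w.1 ∈ W ∧ w.2 ∈ W ∧ w.2⁻¹ * w.1 ∈ W}.ncard
      = {w : H × H | w.1 ∈ W ∧ w.2 ∈ W ∧ w.1 * w.2 ∈ W}.ncard := by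
  have hinj : Function.Injective (fun w : H × H => (w.2, w.2⁻¹ * w.1)) := by
    intro w w' h
    simp only [Prod.mk.injEq] at h
    obtain ⟨h1, h2⟩ := h
    rw [h1] at h2
    exact Prod.ext (mul_left_cancel h2) h1
  have himg : {w : H × H | w.1 ∈ W ∧ w.2 ∈ W ∧ w.1 * w.2 ∈ W}
      = (fun w : H × H => (w.2, w.2⁻¹ * w.1)) ''
        {w : H × H | w.1 ∈ W ∧ w.2 ∈ W ∧ w.2⁻¹ * w.1 ∈ W} := by
    ext ⟨β, γ⟩
    constructor
    · rintro ⟨h1, h2, h3⟩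
      refine ⟨(β * γ, β), ⟨h3, h1, ?_⟩, ?_⟩
      · have e : β⁻¹ * (β * γ) = γ := by group
        rw [e]; exact h2
      · have e : β⁻¹ * (β * γ) = γ := by group
        exact Prod.ext rfl e
    · rintro ⟨⟨a, b⟩, ⟨h1, h2, h3⟩, heq⟩
      simp only [Prod.mk.injEq] at heq
      obtain ⟨rfl, rfl⟩ := heq
      refine ⟨h2, h3, ?_⟩
      have e : b * (b⁻¹ * a) = a := by group
      rw [e]; exact h1
  rw [himg, Set.ncard_image_of_injective _ hinj]

lemma mset_b (W : Set H) :
    {w : H × H | w.1⁻¹ ∈ W ∧ w.2⁻¹ ∈ W ∧ w.2⁻¹ * w.1 ∈ W}.ncard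
      = {w : H × H | w.1 ∈ W ∧ w.2 ∈ W ∧ w.1 * w.2 ∈ W}.ncard := by
  have hinj : Function.Injective (fun w : H × H => (w.2⁻¹ * w.1, w.1⁻¹)) := by
    intro w w' h
    simp only [Prod.mk.injEq] at h
    obtain ⟨h1, h2⟩ := h
    have e1 : w.1 = w'.1 := inv_injective h2
    rw [e1] at h1
    exact Prod.ext e1 (inv_injective (mul_right_cancel h1))
  have himg : {w : H × H | w.1 ∈ W ∧ w.2 ∈ W ∧ w.1 * w.2 ∈ W}
      = (fun w : H × H => (w.2⁻¹ * w.1, w.1⁻¹)) ''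
        {w : H × H | w.1⁻¹ ∈ W ∧ w.2⁻¹ ∈ W ∧ w.2⁻¹ * w.1 ∈ W} := by
    ext ⟨β, γ⟩
    constructor
    · rintro ⟨h1, h2, h3⟩
      refine ⟨(γ⁻¹, (β * γ)⁻¹), ⟨by simpa using h2, by simpa using h3, ?_⟩, ?_⟩
      · have e : ((β * γ)⁻¹)⁻¹ * γ⁻¹ = β := by group
        rw [e]; exact h1
      · have e : ((β * γ)⁻¹)⁻¹ * γ⁻¹ = β := by group
        exact Prod.ext e (by simp)
    · rintro ⟨⟨a, b⟩, ⟨h1, h2, h3⟩, heq⟩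
      simp only [Prod.mk.injEq] at heq
      obtain ⟨rfl, rfl⟩ := heq
      refine ⟨h3, h1, ?_⟩
      have e : b⁻¹ * a * a⁻¹ = b⁻¹ := by group
      rw [e]; exact h2
  rw [himg, Set.ncard_image_of_injective _ hinj]

lemma mset_c (W : Set H) :
    {w : H × H | w.1⁻¹ ∈ W ∧ w.2 ∈ W ∧ w.1⁻¹ * w.2 ∈ W}.ncard
      = {w : H × H | w.1 ∈ W ∧ w.2 ∈ W ∧ w.1 * w.2 ∈ W}.ncard := by
  have hinj : Function.Injective (fun w : H × H => (w.1⁻¹, w.2)) := by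
    intro w w' h
    simp only [Prod.mk.injEq] at h
    exact Prod.ext (inv_injective h.1) h.2
  have himg : {w : H × H | w.1 ∈ W ∧ w.2 ∈ W ∧ w.1 * w.2 ∈ W}
      = (fun w : H × H => (w.1⁻¹, w.2)) ''
        {w : H × H | w.1⁻¹ ∈ W ∧ w.2 ∈ W ∧ w.1⁻¹ * w.2 ∈ W} := by
    ext ⟨β, γ⟩
    constructor
    · rintro ⟨h1, h2, h3⟩
      exact ⟨(β⁻¹, γ), ⟨by simpa using h1, h2, by simpa using h3⟩, by simp⟩
    · rintro ⟨⟨a, b⟩, ⟨h1, h2, h3⟩, heq⟩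
      simp only [Prod.mk.injEq] at heq
      obtain ⟨rfl, rfl⟩ := heq
      exact ⟨h1, h2, h3⟩
  rw [himg, Set.ncard_image_of_injective _ hinj]

lemma Mcls_tmpl (hm : 3 ≤ m) (i : ZMod m) (hgap : (i - 1 : ZMod m) = (i + 1) + 1) :
    (Cls S t x ((1:H),i) (i+1) (i-1)).ncard =
      {w : H × H | w.1 ∈ KK t x i ∧ w.2⁻¹ ∈ KK t x (i-1) ∧
        w.1⁻¹ * w.2 ∈ KK t x (i+1)}.ncard := by
  have hset : Cls S t x ((1:H),i) (i+1) (i-1) =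
      {q : (H × ZMod m) × (H × ZMod m) |
        (q.1.2 = i+1 ∧ q.1.1 ∈ KK t x i) ∧ (q.2.2 = i-1 ∧ q.2.1⁻¹ ∈ KK t x (i-1)) ∧
          q.1.1⁻¹ * q.2.1 ∈ KK t x (i+1)} := by
    ext ⟨⟨a, ja⟩, ⟨b, jb⟩⟩
    simp only [Cls, triD, Set.mem_setOf_eq]
    constructor
    · rintro ⟨⟨h1, h2, h3⟩, rfl, rfl⟩
      refine ⟨⟨rfl, by simpa using (adjD_up hm).mp h1⟩,
        ⟨rfl, by simpa using (adjD_down hm).mp h2⟩, ?_⟩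
      rw [hgap] at h3
      exact (adjD_up hm).mp h3
    · rintro ⟨⟨rfl, h1⟩, ⟨rfl, h2⟩, h3⟩
      refine ⟨⟨(adjD_up hm).mpr (by simpa using h1),
        (adjD_down hm).mpr (by simpa using h2), ?_⟩, rfl, rfl⟩
      rw [hgap]
      exact (adjD_up hm).mpr h3
  rw [hset]
  exact ncard_pairset (i+1) (i-1) (fun a => a ∈ KK t x i)
    (fun b => b⁻¹ ∈ KK t x (i-1)) (fun a b => a⁻¹ * b ∈ KK t x (i+1))

lemma Mcls_val3 (i : ZMod 3) :
    (Cls S t x ((1:H),i) (i+1) (i-1)).ncard =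
      {w : H × H | w.1 ∈ Kp t x ∧ w.2 ∈ Kp t x ∧ w.1 * w.2 ∈ Kp t x}.ncard := by
  have h30 : (3 : ZMod 3) = 0 := by decide
  rw [Mcls_tmpl (le_refl 3) i (by linear_combination -h30)]
  have hi : i = 0 ∨ i = 1 ∨ i = 2 := by revert i; decide
  rcases hi with rfl | rfl | rfl
  · -- i = 0 : (KK 0, KK (-1) = KK 2, KK 1) = (Kp, Km, Km)
    rw [show ((0:ZMod 3) - 1) = 2 from by decide, show ((0:ZMod 3) + 1) = 1 from by decide]
    rw [show KK t x (0 : ZMod 3) = Kp t x from if_pos rfl,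
      show KK t x (2 : ZMod 3) = Km t x from if_neg (by decide),
      show KK t x (1 : ZMod 3) = Km t x from if_neg (by decide)]
    have hset : {w : H × H | w.1 ∈ Kp t x ∧ w.2⁻¹ ∈ Km t x ∧ w.1⁻¹ * w.2 ∈ Km t x}
        = {w : H × H | w.1 ∈ Kp t x ∧ w.2 ∈ Kp t x ∧ w.2⁻¹ * w.1 ∈ Kp t x} := by
      ext w
      rw [Set.mem_setOf_eq, Set.mem_setOf_eq, mem_Km_iff, mem_Km_iff, inv_inv, mul_inv_rev,
        inv_inv]
    rw [hset, mset_a]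
  · -- i = 1 : (KK 1, KK 0, KK 2) = (Km, Kp, Km)
    rw [show ((1:ZMod 3) - 1) = 0 from by decide, show ((1:ZMod 3) + 1) = 2 from by decide]
    rw [show KK t x (1 : ZMod 3) = Km t x from if_neg (by decide),
      show KK t x (0 : ZMod 3) = Kp t x from if_pos rfl,
      show KK t x (2 : ZMod 3) = Km t x from if_neg (by decide)]
    have hset : {w : H × H | w.1 ∈ Km t x ∧ w.2⁻¹ ∈ Kp t x ∧ w.1⁻¹ * w.2 ∈ Km t x}
        = {w : H × H | w.1⁻¹ ∈ Kp t x ∧ w.2⁻¹ ∈ Kp t x ∧ w.2⁻¹ * w.1 ∈ Kp t x} := by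
      ext w
      rw [Set.mem_setOf_eq, Set.mem_setOf_eq, mem_Km_iff, mem_Km_iff, mul_inv_rev, inv_inv]
    rw [hset, mset_b]
  · -- i = 2 : (KK 2, KK 1, KK 0) = (Km, Km, Kp)
    rw [show ((2:ZMod 3) - 1) = 1 from by decide, show ((2:ZMod 3) + 1) = 0 from by decide]
    rw [show KK t x (2 : ZMod 3) = Km t x from if_neg (by decide),
      show KK t x (1 : ZMod 3) = Km t x from if_neg (by decide),
      show KK t x (0 : ZMod 3) = Kp t x from if_pos rfl]
    have hset : {w : H × H | w.1 ∈ Km t x ∧ w.2⁻¹ ∈ Km t x ∧ w.1⁻¹ * w.2 ∈ Kp t x}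
        = {w : H × H | w.1⁻¹ ∈ Kp t x ∧ w.2 ∈ Kp t x ∧ w.1⁻¹ * w.2 ∈ Kp t x} := by
      ext w
      rw [Set.mem_setOf_eq, Set.mem_setOf_eq, mem_Km_iff, mem_Km_iff, inv_inv]
    rw [hset, mset_c]

lemma Mcls_empty (hm : 4 ≤ m) (i : ZMod m) :
    Cls S t x ((1:H),i) (i+1) (i-1) = ∅ := by
  ext q
  simp only [Set.mem_empty_iff_false, iff_false]
  rintro ⟨⟨-, -, h3⟩, h4, h5⟩
  rcases adjD_layer h3 with h | h | h
  · rw [h4, h5] at h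
    exact zmod_two_ne_zero (m := m) (by omega) (by linear_combination -h)
  · rw [h4, h5] at h
    exact zmod_three_ne_zero (m := m) hm (by linear_combination -h)
  · rw [h4, h5] at h
    exact zmod_one_ne_zero (m := m) (by omega) (by linear_combination h)

lemma Mcls_const (hm : 3 ≤ m) (i i' : ZMod m) :
    (Cls S t x ((1:H),i) (i+1) (i-1)).ncard
      = (Cls S t x ((1:H),i') (i'+1) (i'-1)).ncard := by
  rcases eq_or_lt_of_le hm with h3 | h4
  · have hm3 : m = 3 := h3.symm
    subst hm3
    rw [Mcls_val3, Mcls_val3]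
  · rw [Mcls_empty (by omega) i, Mcls_empty (by omega) i']

end Mcls


section PhiValues
variable [Finite H]
variable {m : ℕ}

lemma KK_zero : KK t x (0 : ZMod m) = Kp t x := if_pos rfl
lemma KK_of_ne {i : ZMod m} (h : i ≠ 0) : KK t x i = Km t x := if_neg h

lemma one_mem_KK (i : ZMod m) : (1:H) ∈ KK t x i := by
  rw [KK]
  split
  · exact Or.inl rfl
  · exact Or.inl rfl

include hS1 hSsym hx htx in
lemma phi_vals (hm : 3 ≤ m) :
    ∃ B : ℕ,
      phiD S t x ((1:H), (0 : ZMod m)) = B + 4 ∧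
      phiD S t x ((1:H), (1 : ZMod m)) = B + 8 ∧
      (∀ i : ZMod m, i ≠ 0 → i ≠ 1 → phiD S t x ((1:H), i) = B + 6) := by
  have hEKp : (Eset S (Kp t x)).ncard = (Dset S (Kp t x)).ncard + 2 :=
    ncard_Eset_Kp hS1 hSsym hx htx
  have hDKm : (Dset S (Km t x)).ncard = (Dset S (Kp t x)).ncard + 2 :=
    (ncard_Dset_Km hS1 hSsym hx htx).trans hEKp
  have hEKm : (Eset S (Km t x)).ncard = (Dset S (Kp t x)).ncard :=
    ncard_Eset_Km hS1 hSsym hx htx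
  have h1ne : (1 : ZMod m) ≠ 0 := zmod_one_ne_zero (by omega)
  have h0m1 : (0 : ZMod m) - 1 ≠ 0 := fun h =>
    zmod_one_ne_zero (m := m) (by omega) (by linear_combination -h)
  refine ⟨(Eset S S).ncard + 6 * (Dset S (Kp t x)).ncard
    + 2 * (Cls S t x ((1:H), (0:ZMod m)) (0+1) (0-1)).ncard, ?_, ?_, ?_⟩
  · rw [phiD_formula hSsym hm 0, KK_zero, KK_of_ne h0m1, hEKp, hDKm, hEKm]
    ring
  · rw [phiD_formula hSsym hm 1, Mcls_const hm 1 0, KK_of_ne h1ne,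
      show (1:ZMod m) - 1 = 0 from by ring, KK_zero, hEKp, hDKm, hEKm]
    ring
  · intro i h0 h1
    have him1 : i - 1 ≠ 0 := fun h => h1 (by linear_combination h)
    rw [phiD_formula hSsym hm i, Mcls_const hm i 0, KK_of_ne h0, KK_of_ne him1,
      hDKm, hEKm]
    ring

end PhiValues

section Sigma
variable [Finite H]
variable {m : ℕ}

include hS1 hSsym hx htx in
/-- Main rigidity: every adjacency automorphism of the layered graph is a diagonal
left translation (m ≥ 3 case). -/
theorem sigma_diag (hm : 3 ≤ m)
    (hrigid : ∀ f : H → H, Function.Bijective f →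
      (∀ a b : H, (f a)⁻¹ * f b ∈ S ↔ a⁻¹ * b ∈ S) → ∃ c : H, ∀ g, f g = c * g)
    (σ : Equiv.Perm (H × ZMod m))
    (hσ : ∀ p q : H × ZMod m, adjD S t x (σ p) (σ q) ↔ adjD S t x p q) :
    ∃ a : H, ∀ p : H × ZMod m, σ p = (a * p.1, p.2) := by
  haveI : NeZero m := ⟨by omega⟩
  have hphi : ∀ p, phiD S t x (σ p) = phiD S t x p := phiD_invariant σ hσ
  obtain ⟨B, hB0, hB1, hBmid⟩ := phi_vals hS1 hSsym hx htx hm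
  have hlayval : ∀ p : H × ZMod m, phiD S t x p = phiD S t x ((1:H), p.2) := by
    intro p
    have := phiD_layer_const (S := S) (t := t) (x := x) p.1 p.2
    simpa using this
  -- σ fixes layer 0 and layer 1
  have hlay01 : ∀ g : H, (σ (g, (0:ZMod m))).2 = 0 ∧ (σ (g, (1:ZMod m))).2 = 1 := by
    intro g
    constructor
    · have h2 : phiD S t x ((1:H), (σ (g, (0:ZMod m))).2) = B + 4 := by
        rw [← hlayval, hphi, hlayval, hB0]
      by_contra hne
      by_cases hj1 : (σ (g, (0:ZMod m))).2 = 1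
      · rw [hj1, hB1] at h2; omega
      · rw [hBmid _ hne hj1] at h2; omega
    · have h2 : phiD S t x ((1:H), (σ (g, (1:ZMod m))).2) = B + 8 := by
        rw [← hlayval, hphi, hlayval, hB1]
      by_contra hne
      by_cases hj0 : (σ (g, (1:ZMod m))).2 = 0
      · rw [hj0, hB0] at h2; omega
      · rw [hBmid _ hj0 hne] at h2; omega
  -- coverage: if σ maps layer j into layer j, it maps onto it
  have cover : ∀ j : ZMod m, (∀ g : H, (σ (g, j)).2 = j) →
      ∀ q : H × ZMod m, q.2 = j → ∃ g : H, σ (g, j) = q := by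
    intro j hQ q hqj
    set L : Set (H × ZMod m) := {p | p.2 = j} with hL
    have hsub : (fun p : H × ZMod m => σ p) '' L ⊆ L := by
      rintro p ⟨w, hw, rfl⟩
      have : w = (w.1, j) := by rw [← hw]
      rw [this]
      exact hQ w.1
    have hcards : L.ncard ≤ ((fun p : H × ZMod m => σ p) '' L).ncard := by
      rw [Set.ncard_image_of_injective _ σ.injective]
    have heq : (fun p : H × ZMod m => σ p) '' L = L :=
      Set.eq_of_subset_of_ncard_le hsub hcards (Set.toFinite _)
    have hqL : q ∈ (fun p : H × ZMod m => σ p) '' L := by rw [heq]; exact hqj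
    obtain ⟨w, hw, hwq⟩ := hqL
    refine ⟨w.1, ?_⟩
    have : w = (w.1, j) := by rw [← hw]
    rw [← this]
    exact hwq
  -- all layers are fixed
  have hlayers : ∀ j : ZMod m, ∀ g : H, (σ (g, j)).2 = j := by
    have main : ∀ n : ℕ, (∀ g : H, (σ (g, ((n : ℕ) : ZMod m))).2 = (n : ZMod m)) ∧
        (∀ g : H, (σ (g, (((n+1) : ℕ) : ZMod m))).2 = (((n+1) : ℕ) : ZMod m)) := by
      intro n
      induction n with
      | zero =>
        constructor
        · intro g; simpa using (hlay01 g).1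
        · intro g; simpa using (hlay01 g).2
      | succ n ih =>
        refine ⟨ih.2, ?_⟩
        intro g
        set j : ZMod m := ((n : ℕ) : ZMod m) with hj
        have hcast2 : (((n+2 : ℕ)) : ZMod m) = j + 2 := by push_cast; ring
        have hcast1 : (((n+1 : ℕ)) : ZMod m) = j + 1 := by push_cast; ring
        rw [hcast2]
        -- (g, j+2) is adjacent to (g, j+1)
        have hadj : adjD S t x ((g, j+2) : H × ZMod m) ((g, j+1) : H × ZMod m) := by
          refine Or.inr (Or.inr ⟨by ring, ?_⟩)
          simpa using one_mem_KK (t := t) (x := x) (j+1)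
        have hadj2 : adjD S t x (σ (g, j+2)) (σ (g, j+1)) := (hσ _ _).mpr hadj
        have hl1 : (σ (g, j+1)).2 = j + 1 := by
          have := ih.2 g
          rw [hcast1] at this
          exact this
        have hr := adjD_layer hadj2
        rw [hl1] at hr
        -- r ∈ {j+1, j, j+2}
        rcases hr with hr | hr | hr
        · -- (σ (g,j+2)).2 = j+1 : contradiction via coverage of layer j+1
          exfalso
          have hQ1 : ∀ g' : H, (σ (g', j+1)).2 = j + 1 := by
            intro g'
            have := ih.2 g'
            rwa [hcast1] at this
          obtain ⟨g', hg'⟩ := cover (j+1) hQ1 (σ (g, j+2)) hr.symm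
          have := σ.injective hg'
          have h2 : (j + 1 : ZMod m) = j + 2 := congrArg Prod.snd this
          exact zmod_one_ne_zero (m := m) (by omega) (by linear_combination -h2)
        · -- j + 1 = (σ (g,j+2)).2 + 1, so layer = j : contradiction via coverage of layer j
          exfalso
          have hrj : (σ (g, j+2)).2 = j := by linear_combination -hr
          have hQ0 : ∀ g' : H, (σ (g', j)).2 = j := ih.1
          obtain ⟨g', hg'⟩ := cover j hQ0 (σ (g, j+2)) hrj
          have := σ.injective hg'
          have h2 : (j : ZMod m) = j + 2 := congrArg Prod.snd this
          exact zmod_two_ne_zero (m := m) hm (by linear_combination -h2)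
        · -- (σ (g,j+2)).2 = (j+1)+1 = j+2
          rw [hr]; ring
    intro j g
    obtain ⟨n, rfl⟩ := ZMod.natCast_zmod_surjective j
    exact (main n).1 g
  -- restriction to each layer is a left translation
  have htau : ∀ j : ZMod m, ∃ c : H, ∀ g : H, σ (g, j) = (c * g, j) := by
    intro j
    set τ : H → H := fun g => (σ (g, j)).1 with hτ
    have hστ : ∀ g : H, σ (g, j) = (τ g, j) := by
      intro g
      have h2 := hlayers j g
      exact Prod.ext rfl h2
    have hbij : Function.Bijective τ := by
      constructor
      · intro a b hab
        have : σ (a, j) = σ (b, j) := by rw [hστ, hστ, hab]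
        have := σ.injective this
        exact congrArg Prod.fst this
      · intro b
        obtain ⟨g, hg⟩ := cover j (fun g => hlayers j g) (b, j) rfl
        exact ⟨g, by rw [hστ] at hg; exact congrArg Prod.fst hg⟩
    have hpres : ∀ a b : H, (τ a)⁻¹ * τ b ∈ S ↔ a⁻¹ * b ∈ S := by
      intro a b
      have h2 := hσ (a, j) (b, j)
      rw [hστ, hστ, adjD_same (show 2 ≤ m by omega), adjD_same (show 2 ≤ m by omega)] at h2
      exact h2
    obtain ⟨c, hc⟩ := hrigid τ hbij hpres
    exact ⟨c, fun g => by rw [hστ, hc]⟩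
  -- the translations agree across layers
  choose cof hcof using htau
  have hstep : ∀ j : ZMod m, cof (j + 1) = cof j := by
    intro j
    have hKK : ∀ k : H, k ∈ KK t x j ↔ ((cof j)⁻¹ * cof (j+1)) * k ∈ KK t x j := by
      intro k
      have h2 := hσ ((1 : H), j) ((k : H), j+1)
      rw [hcof j 1, hcof (j+1) k, adjD_up hm, adjD_up hm] at h2
      have e1 : ((1:H))⁻¹ * k = k := by group
      have e2 : (cof j * 1)⁻¹ * (cof (j+1) * k) = ((cof j)⁻¹ * cof (j+1)) * k := by group
      rw [e1, e2] at h2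
      exact h2.symm
    have hc1 : (cof j)⁻¹ * cof (j+1) = 1 := by
      by_cases hj : j = 0
      · subst hj
        rw [KK_zero] at hKK
        exact shift_Kp hS1 hx htx hKK
      · rw [KK_of_ne hj] at hKK
        exact shift_Km hS1 hSsym hx htx hKK
    have := congrArg (fun z => cof j * z) hc1
    simpa [← mul_assoc] using this
  have hall : ∀ j : ZMod m, cof j = cof 0 := by
    intro j
    obtain ⟨n, rfl⟩ := ZMod.natCast_zmod_surjective j
    induction n with
    | zero => simp
    | succ n ih =>
      have hcast : (((n+1 : ℕ)) : ZMod m) = ((n : ℕ) : ZMod m) + 1 := by push_cast; ring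
      rw [hcast, hstep, ih]
  refine ⟨cof 0, ?_⟩
  intro p
  have h2 := hcof p.2 p.1
  rw [hall p.2] at h2
  rw [← h2]

end Sigma


section TwoCase
variable [Finite H]

lemma adjD_cross2_0 {a b : H} :
    adjD S t x (a, (0 : ZMod 2)) (b, (1 : ZMod 2)) ↔ a⁻¹ * b ∈ Kp t x := by
  rw [adjD]
  have h01 : ((0 : ZMod 2) = (1 : ZMod 2)) = False := by simp
  have hKK0 : KK t x (0 : ZMod 2) = Kp t x := if_pos rfl
  have hKK1 : KK t x (1 : ZMod 2) = Km t x := if_neg (by decide)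
  simp only [h01]
  constructor
  · rintro (⟨h, -⟩ | ⟨-, h⟩ | ⟨-, h⟩)
    · simp at h
    · rwa [hKK0] at h
    · rw [hKK1, mem_Km_iff] at h
      simpa using h
  · intro h
    exact Or.inr (Or.inl ⟨show (1 : ZMod 2) = 0 + 1 from by decide, by rwa [hKK0]⟩)

lemma adjD_cross2_1 {a b : H} :
    adjD S t x (a, (1 : ZMod 2)) (b, (0 : ZMod 2)) ↔ a⁻¹ * b ∈ Km t x := by
  rw [adjD]
  have hKK0 : KK t x (0 : ZMod 2) = Kp t x := if_pos rfl
  have hKK1 : KK t x (1 : ZMod 2) = Km t x := if_neg (by decide)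
  constructor
  · rintro (⟨h, -⟩ | ⟨-, h⟩ | ⟨-, h⟩)
    · simp at h
    · rwa [hKK1] at h
    · rw [hKK0] at h
      rw [mem_Km_iff]
      simpa using h
  · intro h
    exact Or.inr (Or.inl ⟨show (0 : ZMod 2) = 1 + 1 from by decide, by rwa [hKK1]⟩)

lemma adjD_cross2 {a b : H} {i : ZMod 2} :
    adjD S t x (a, i) (b, i+1) ↔ a⁻¹ * b ∈ (if i = 0 then Kp t x else Km t x) := by
  have hi : i = 0 ∨ i = 1 := by revert i; decide
  rcases hi with rfl | rfl
  · rw [if_pos rfl, show ((0:ZMod 2)+1) = 1 from by decide]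
    exact adjD_cross2_0
  · rw [if_neg (by decide), show ((1:ZMod 2)+1) = 0 from by decide]
    exact adjD_cross2_1

lemma triD_decomp2 (i : ZMod 2) :
    triD S t x ((1:H), i) =
      (Cls S t x ((1:H),i) i i ∪ Cls S t x ((1:H),i) i (i+1)) ∪
      (Cls S t x ((1:H),i) (i+1) i ∪ Cls S t x ((1:H),i) (i+1) (i+1)) := by
  have htri : ∀ j : ZMod 2, j = i ∨ j = i + 1 := by revert i; decide
  ext q
  constructor
  · intro hq
    rcases htri q.1.2 with h1 | h1 <;> rcases htri q.2.2 with h2 | h2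
    · exact Or.inl (Or.inl ⟨hq, h1, h2⟩)
    · exact Or.inl (Or.inr ⟨hq, h1, h2⟩)
    · exact Or.inr (Or.inl ⟨hq, h1, h2⟩)
    · exact Or.inr (Or.inr ⟨hq, h1, h2⟩)
  · rintro (((h|h))|((h|h))) <;> exact h.1

lemma phiD_formula2 (hSsym : ∀ s ∈ S, s⁻¹ ∈ S) (i : ZMod 2) :
    phiD S t x ((1:H), i) =
      (Eset S S).ncard + 2 * (Dset S (if i = 0 then Kp t x else Km t x)).ncard
        + (Eset S (if i = 0 then Kp t x else Km t x)).ncard := by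
  have hne : i ≠ i + 1 := by
    have h : ∀ k : ZMod 2, k ≠ k + 1 := by decide
    exact h i
  set W : Set H := if i = 0 then Kp t x else Km t x with hW
  have hcr : ∀ a b : H, adjD S t x ((a, i) : H × ZMod 2) (b, i+1) ↔ a⁻¹ * b ∈ W :=
    fun a b => adjD_cross2
  -- class evaluations
  have hCii : (Cls S t x ((1:H), i) i i).ncard = (Eset S S).ncard := by
    have hset : Cls S t x ((1:H), i) i i =
        {q : (H × ZMod 2) × (H × ZMod 2) |
          (q.1.2 = i ∧ q.1.1 ∈ S) ∧ (q.2.2 = i ∧ q.2.1 ∈ S) ∧ q.1.1⁻¹ * q.2.1 ∈ S} := by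
      ext ⟨⟨a, ja⟩, ⟨b, jb⟩⟩
      simp only [Cls, triD, Set.mem_setOf_eq]
      constructor
      · rintro ⟨⟨h1, h2, h3⟩, rfl, rfl⟩
        exact ⟨⟨rfl, by simpa using (adjD_same (m := 2) (by norm_num)).mp h1⟩,
          ⟨rfl, by simpa using (adjD_same (m := 2) (by norm_num)).mp h2⟩,
          (adjD_same (by norm_num)).mp h3⟩
      · rintro ⟨⟨rfl, h1⟩, ⟨rfl, h2⟩, h3⟩
        exact ⟨⟨(adjD_same (by norm_num)).mpr (by simpa using h1),
          (adjD_same (by norm_num)).mpr (by simpa using h2),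
          (adjD_same (by norm_num)).mpr h3⟩, rfl, rfl⟩
    rw [hset]
    exact ncard_pairset i i (fun a => a ∈ S) (fun b => b ∈ S) (fun a b => a⁻¹ * b ∈ S)
  have hCiup : (Cls S t x ((1:H), i) i (i+1)).ncard = (Dset S W).ncard := by
    have hset : Cls S t x ((1:H), i) i (i+1) =
        {q : (H × ZMod 2) × (H × ZMod 2) |
          (q.1.2 = i ∧ q.1.1 ∈ S) ∧ (q.2.2 = i+1 ∧ q.2.1 ∈ W) ∧ q.1.1⁻¹ * q.2.1 ∈ W} := by
      ext ⟨⟨a, ja⟩, ⟨b, jb⟩⟩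
      simp only [Cls, triD, Set.mem_setOf_eq]
      constructor
      · rintro ⟨⟨h1, h2, h3⟩, rfl, rfl⟩
        exact ⟨⟨rfl, by simpa using (adjD_same (m := 2) (by norm_num)).mp h1⟩,
          ⟨rfl, by simpa using (hcr 1 b).mp h2⟩, (hcr a b).mp h3⟩
      · rintro ⟨⟨rfl, h1⟩, ⟨rfl, h2⟩, h3⟩
        exact ⟨⟨(adjD_same (by norm_num)).mpr (by simpa using h1),
          (hcr 1 b).mpr (by simpa using h2), (hcr a b).mpr h3⟩, rfl, rfl⟩
    rw [hset]
    exact (ncard_pairset i (i+1) (fun a => a ∈ S) (fun b => b ∈ W)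
      (fun a b => a⁻¹ * b ∈ W)).trans (gset1 _)
  have hCupi : (Cls S t x ((1:H), i) (i+1) i).ncard = (Dset S W).ncard := by
    have hset : Cls S t x ((1:H), i) (i+1) i =
        {q : (H × ZMod 2) × (H × ZMod 2) |
          (q.1.2 = i+1 ∧ q.1.1 ∈ W) ∧ (q.2.2 = i ∧ q.2.1 ∈ S) ∧ q.2.1⁻¹ * q.1.1 ∈ W} := by
      ext ⟨⟨a, ja⟩, ⟨b, jb⟩⟩
      simp only [Cls, triD, Set.mem_setOf_eq]
      constructor
      · rintro ⟨⟨h1, h2, h3⟩, rfl, rfl⟩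
        refine ⟨⟨rfl, by simpa using (hcr 1 a).mp h1⟩,
          ⟨rfl, by simpa using (adjD_same (m := 2) (by norm_num)).mp h2⟩, ?_⟩
        exact (hcr b a).mp (adjD_symm hSsym h3)
      · rintro ⟨⟨rfl, h1⟩, ⟨rfl, h2⟩, h3⟩
        exact ⟨⟨(hcr 1 a).mpr (by simpa using h1),
          (adjD_same (by norm_num)).mpr (by simpa using h2),
          adjD_symm hSsym ((hcr b a).mpr h3)⟩, rfl, rfl⟩
    rw [hset]
    exact (ncard_pairset (i+1) i (fun a => a ∈ W) (fun b => b ∈ S)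
      (fun a b => b⁻¹ * a ∈ W)).trans (gset2 _)
  have hCupup : (Cls S t x ((1:H), i) (i+1) (i+1)).ncard = (Eset S W).ncard := by
    have hset : Cls S t x ((1:H), i) (i+1) (i+1) =
        {q : (H × ZMod 2) × (H × ZMod 2) |
          (q.1.2 = i+1 ∧ q.1.1 ∈ W) ∧ (q.2.2 = i+1 ∧ q.2.1 ∈ W) ∧ q.1.1⁻¹ * q.2.1 ∈ S} := by
      ext ⟨⟨a, ja⟩, ⟨b, jb⟩⟩
      simp only [Cls, triD, Set.mem_setOf_eq]
      constructor
      · rintro ⟨⟨h1, h2, h3⟩, rfl, rfl⟩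
        exact ⟨⟨rfl, by simpa using (hcr 1 a).mp h1⟩,
          ⟨rfl, by simpa using (hcr 1 b).mp h2⟩,
          (adjD_same (m := 2) (by norm_num)).mp h3⟩
      · rintro ⟨⟨rfl, h1⟩, ⟨rfl, h2⟩, h3⟩
        exact ⟨⟨(hcr 1 a).mpr (by simpa using h1), (hcr 1 b).mpr (by simpa using h2),
          (adjD_same (by norm_num)).mpr h3⟩, rfl, rfl⟩
    rw [hset]
    exact ncard_pairset (i+1) (i+1) (fun a => a ∈ W) (fun b => b ∈ W)
      (fun a b => a⁻¹ * b ∈ S)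
  rw [phiD, triD_decomp2 i]
  rw [Set.ncard_union_eq (by
      simp only [Set.disjoint_union_left, Set.disjoint_union_right]
      and_intros <;> exact Cls_disj_fst hne) (Set.toFinite _) (Set.toFinite _),
    Set.ncard_union_eq (Cls_disj_snd hne) (Set.toFinite _) (Set.toFinite _),
    Set.ncard_union_eq (Cls_disj_snd hne) (Set.toFinite _) (Set.toFinite _)]
  rw [hCii, hCiup, hCupi, hCupup]
  ring

include hS1 hSsym hx htx in
theorem sigma_diag2
    (hrigid : ∀ f : H → H, Function.Bijective f →
      (∀ a b : H, (f a)⁻¹ * f b ∈ S ↔ a⁻¹ * b ∈ S) → ∃ c : H, ∀ g, f g = c * g)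
    (σ : Equiv.Perm (H × ZMod 2))
    (hσ : ∀ p q : H × ZMod 2, adjD S t x (σ p) (σ q) ↔ adjD S t x p q) :
    ∃ a : H, ∀ p : H × ZMod 2, σ p = (a * p.1, p.2) := by
  have hphi : ∀ p, phiD S t x (σ p) = phiD S t x p := phiD_invariant σ hσ
  have hEKp : (Eset S (Kp t x)).ncard = (Dset S (Kp t x)).ncard + 2 :=
    ncard_Eset_Kp hS1 hSsym hx htx
  have hDKm : (Dset S (Km t x)).ncard = (Dset S (Kp t x)).ncard + 2 :=
    (ncard_Dset_Km hS1 hSsym hx htx).trans hEKp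
  have hEKm : (Eset S (Km t x)).ncard = (Dset S (Kp t x)).ncard :=
    ncard_Eset_Km hS1 hSsym hx htx
  have hB0 : phiD S t x ((1:H), (0 : ZMod 2)) =
      (Eset S S).ncard + 3 * (Dset S (Kp t x)).ncard + 2 := by
    rw [phiD_formula2 hSsym 0, if_pos rfl, hEKp]; ring
  have hB1 : phiD S t x ((1:H), (1 : ZMod 2)) =
      (Eset S S).ncard + 3 * (Dset S (Kp t x)).ncard + 4 := by
    rw [phiD_formula2 hSsym 1, if_neg (by decide), hDKm, hEKm]; ring
  have hlayval : ∀ p : H × ZMod 2, phiD S t x p = phiD S t x ((1:H), p.2) := by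
    intro p
    have := phiD_layer_const (S := S) (t := t) (x := x) p.1 p.2
    simpa using this
  have hlayers : ∀ (j : ZMod 2) (g : H), (σ (g, j)).2 = j := by
    intro j g
    have hval : phiD S t x ((1:H), (σ (g, j)).2) = phiD S t x ((1:H), j) := by
      rw [← hlayval, hphi, hlayval]
    by_contra hne
    have hcases : ∀ a b : ZMod 2, a ≠ b → (a = 0 ∧ b = 1) ∨ (a = 1 ∧ b = 0) := by decide
    rcases hcases _ _ hne with ⟨h1, h2⟩ | ⟨h1, h2⟩ <;> rw [h1, h2] at hval
    · rw [hB0, hB1] at hval; omega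
    · rw [hB0, hB1] at hval; omega
  have cover : ∀ j : ZMod 2, ∀ q : H × ZMod 2, q.2 = j → ∃ g : H, σ (g, j) = q := by
    intro j q hqj
    set L : Set (H × ZMod 2) := {p | p.2 = j} with hL
    have hsub : (fun p : H × ZMod 2 => σ p) '' L ⊆ L := by
      rintro p ⟨w, hw, rfl⟩
      have : w = (w.1, j) := by rw [← hw]
      rw [this]
      exact hlayers j w.1
    have hcards : L.ncard ≤ ((fun p : H × ZMod 2 => σ p) '' L).ncard := by
      rw [Set.ncard_image_of_injective _ σ.injective]
    have heq : (fun p : H × ZMod 2 => σ p) '' L = L :=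
      Set.eq_of_subset_of_ncard_le hsub hcards (Set.toFinite _)
    have hqL : q ∈ (fun p : H × ZMod 2 => σ p) '' L := by rw [heq]; exact hqj
    obtain ⟨w, hw, hwq⟩ := hqL
    refine ⟨w.1, ?_⟩
    have : w = (w.1, j) := by rw [← hw]
    rw [← this]
    exact hwq
  have htau : ∀ j : ZMod 2, ∃ c : H, ∀ g : H, σ (g, j) = (c * g, j) := by
    intro j
    set τ : H → H := fun g => (σ (g, j)).1 with hτ
    have hστ : ∀ g : H, σ (g, j) = (τ g, j) := fun g => Prod.ext rfl (hlayers j g)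
    have hbij : Function.Bijective τ := by
      constructor
      · intro a b hab
        have : σ (a, j) = σ (b, j) := by rw [hστ, hστ, hab]
        exact congrArg Prod.fst (σ.injective this)
      · intro b
        obtain ⟨g, hg⟩ := cover j (b, j) rfl
        exact ⟨g, by rw [hστ] at hg; exact congrArg Prod.fst hg⟩
    have hpres : ∀ a b : H, (τ a)⁻¹ * τ b ∈ S ↔ a⁻¹ * b ∈ S := by
      intro a b
      have h2 := hσ (a, j) (b, j)
      rw [hστ, hστ, adjD_same (by norm_num), adjD_same (by norm_num)] at h2
      exact h2
    obtain ⟨c, hc⟩ := hrigid τ hbij hpres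
    exact ⟨c, fun g => by rw [hστ, hc]⟩
  choose cof hcof using htau
  have hstep : cof 1 = cof 0 := by
    have hKK : ∀ k : H, k ∈ Kp t x ↔ ((cof 0)⁻¹ * cof 1) * k ∈ Kp t x := by
      intro k
      have h2 := hσ ((1 : H), (0 : ZMod 2)) ((k : H), (1 : ZMod 2))
      rw [hcof 0 1, hcof 1 k, adjD_cross2_0, adjD_cross2_0] at h2
      have e1 : ((1:H))⁻¹ * k = k := by group
      have e2 : (cof 0 * 1)⁻¹ * (cof 1 * k) = ((cof 0)⁻¹ * cof 1) * k := by group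
      rw [e1, e2] at h2
      exact h2.symm
    have hc1 : (cof 0)⁻¹ * cof 1 = 1 := shift_Kp hS1 hx htx hKK
    have := congrArg (fun z => cof 0 * z) hc1
    simpa [← mul_assoc] using this
  refine ⟨cof 0, ?_⟩
  intro p
  have hj : p.2 = 0 ∨ p.2 = 1 := by
    have h : ∀ k : ZMod 2, k = 0 ∨ k = 1 := by decide
    exact h p.2
  have h2 := hcof p.2 p.1
  have hcz : cof p.2 = cof 0 := by
    rcases hj with h | h <;> rw [h]
    exact hstep
  rw [hcz] at h2
  rw [← h2]

end TwoCase


section Degree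
variable [Finite H]
variable {m : ℕ}

include hS1 hSsym hx htx in
lemma ncard_KK (i : ZMod m) : (KK t x i).ncard = 3 := by
  rw [KK]
  split
  · exact ncard_Kp hS1 hSsym hx htx
  · exact ncard_Km hS1 hSsym hx htx

lemma nbrset_eq3 (hm : 3 ≤ m) (g : H) (i : ZMod m) :
    {q : H × ZMod m | adjD S t x (g, i) q} =
      ((fun s : H => ((g * s, i) : H × ZMod m)) '' S) ∪
      ((fun k : H => ((g * k, i+1) : H × ZMod m)) '' KK t x i) ∪
      ((fun k : H => ((g * k⁻¹, i-1) : H × ZMod m)) '' KK t x (i-1)) := by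
  ext ⟨b, jb⟩
  constructor
  · intro hq
    have hlay : jb = i ∨ jb = i + 1 ∨ jb = i - 1 := by
      rcases adjD_layer hq with h|h|h
      exacts [Or.inl h, Or.inr (Or.inl h), Or.inr (Or.inr (by linear_combination -h))]
    rcases hlay with rfl | rfl | rfl
    · refine Or.inl (Or.inl ⟨g⁻¹ * b, (adjD_same (by omega)).mp hq, ?_⟩)
      simp [← mul_assoc]
    · refine Or.inl (Or.inr ⟨g⁻¹ * b, (adjD_up hm).mp hq, ?_⟩)
      simp [← mul_assoc]
    · refine Or.inr ⟨b⁻¹ * g, (adjD_down hm).mp hq, ?_⟩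
      have e : g * (b⁻¹ * g)⁻¹ = b := by group
      exact Prod.ext e rfl
  · rintro ((⟨s, hs, heq⟩ | ⟨k, hk, heq⟩) | ⟨k, hk, heq⟩)
    · cases heq
      exact (adjD_same (by omega)).mpr (by simpa using hs)
    · cases heq
      exact (adjD_up hm).mpr (by simpa using hk)
    · cases heq
      refine (adjD_down hm).mpr ?_
      have e : (g * k⁻¹)⁻¹ * g = k := by group
      rw [e]; exact hk

include hS1 hSsym hx htx in
lemma nbr_card3 (hm : 3 ≤ m) (g : H) (i : ZMod m) :
    {q : H × ZMod m | adjD S t x (g, i) q}.ncard = S.ncard + 6 := by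
  haveI : NeZero m := ⟨by omega⟩
  rw [nbrset_eq3 hm g i]
  have hinj1 : Function.Injective (fun s : H => ((g * s, i) : H × ZMod m)) := by
    intro a b h
    simp only [Prod.mk.injEq] at h
    exact mul_left_cancel h.1
  have hinj2 : Function.Injective (fun k : H => ((g * k, i+1) : H × ZMod m)) := by
    intro a b h
    simp only [Prod.mk.injEq] at h
    exact mul_left_cancel h.1
  have hinj3 : Function.Injective (fun k : H => ((g * k⁻¹, i-1) : H × ZMod m)) := by
    intro a b h
    simp only [Prod.mk.injEq] at h
    exact inv_injective (mul_left_cancel h.1)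
  have hd1 : Disjoint
      (((fun s : H => ((g * s, i) : H × ZMod m)) '' S) ∪
        ((fun k : H => ((g * k, i+1) : H × ZMod m)) '' KK t x i))
      ((fun k : H => ((g * k⁻¹, i-1) : H × ZMod m)) '' KK t x (i-1)) := by
    rw [Set.disjoint_left]
    rintro p (⟨s, -, rfl⟩ | ⟨k, -, rfl⟩) ⟨k', -, heq⟩
    · exact zne2 hm (congrArg Prod.snd heq).symm
    · exact zne3 hm (congrArg Prod.snd heq).symm
  have hd2 : Disjoint ((fun s : H => ((g * s, i) : H × ZMod m)) '' S)
      ((fun k : H => ((g * k, i+1) : H × ZMod m)) '' KK t x i) := by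
    rw [Set.disjoint_left]
    rintro p ⟨s, -, rfl⟩ ⟨k, -, heq⟩
    exact zne1 hm (congrArg Prod.snd heq).symm
  rw [Set.ncard_union_eq hd1 (Set.toFinite _) (Set.toFinite _),
    Set.ncard_union_eq hd2 (Set.toFinite _) (Set.toFinite _),
    Set.ncard_image_of_injective _ hinj1, Set.ncard_image_of_injective _ hinj2,
    Set.ncard_image_of_injective _ hinj3, ncard_KK hS1 hSsym hx htx, ncard_KK hS1 hSsym hx htx]

lemma nbrset_eq2 (g : H) (i : ZMod 2) :
    {q : H × ZMod 2 | adjD S t x (g, i) q} =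
      ((fun s : H => ((g * s, i) : H × ZMod 2)) '' S) ∪
      ((fun k : H => ((g * k, i+1) : H × ZMod 2)) '' (if i = 0 then Kp t x else Km t x)) := by
  have hcr : ∀ a b : H, adjD S t x ((a, i) : H × ZMod 2) (b, i+1) ↔
      a⁻¹ * b ∈ (if i = 0 then Kp t x else Km t x) := fun a b => adjD_cross2
  ext ⟨b, jb⟩
  constructor
  · intro hq
    have hlay : jb = i ∨ jb = i + 1 := by
      have h : ∀ k l : ZMod 2, k = l ∨ k = l + 1 := by decide
      exact h jb i
    rcases hlay with rfl | rfl
    · refine Or.inl ⟨g⁻¹ * b, (adjD_same (by omega)).mp hq, ?_⟩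
      simp [← mul_assoc]
    · refine Or.inr ⟨g⁻¹ * b, (hcr g b).mp hq, ?_⟩
      simp [← mul_assoc]
  · rintro (⟨s, hs, heq⟩ | ⟨k, hk, heq⟩)
    · cases heq
      exact (adjD_same (by omega)).mpr (by simpa using hs)
    · cases heq
      exact (hcr g _).mpr (by simpa using hk)

include hS1 hSsym hx htx in
lemma nbr_card2 (g : H) (i : ZMod 2) :
    {q : H × ZMod 2 | adjD S t x (g, i) q}.ncard = S.ncard + 3 := by
  rw [nbrset_eq2 g i]
  have hinj1 : Function.Injective (fun s : H => ((g * s, i) : H × ZMod 2)) := by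
    intro a b h
    simp only [Prod.mk.injEq] at h
    exact mul_left_cancel h.1
  have hinj2 : Function.Injective (fun k : H => ((g * k, i+1) : H × ZMod 2)) := by
    intro a b h
    simp only [Prod.mk.injEq] at h
    exact mul_left_cancel h.1
  have hne : i ≠ i + 1 := by
    have h : ∀ k : ZMod 2, k ≠ k + 1 := by decide
    exact h i
  have hd : Disjoint ((fun s : H => ((g * s, i) : H × ZMod 2)) '' S)
      ((fun k : H => ((g * k, i+1) : H × ZMod 2)) '' (if i = 0 then Kp t x else Km t x)) := by
    rw [Set.disjoint_left]
    rintro p ⟨s, -, rfl⟩ ⟨k, -, heq⟩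
    exact hne (congrArg Prod.snd heq).symm
  rw [Set.ncard_union_eq hd (Set.toFinite _) (Set.toFinite _),
    Set.ncard_image_of_injective _ hinj1, Set.ncard_image_of_injective _ hinj2]
  congr 1
  split
  · exact ncard_Kp hS1 hSsym hx htx
  · exact ncard_Km hS1 hSsym hx htx

end Degree

end Core

section Assemble

open Classical in
theorem core_construction {G : Type*} [Group G] {H : Type} [Group H] [Finite H]
    (φ : G ≃* H) (S : Set H) (hS1 : (1:H) ∉ S) (hSsym : ∀ s ∈ S, s⁻¹ ∈ S)
    (hrigid : ∀ f : H → H, Function.Bijective f →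
      (∀ a b : H, (f a)⁻¹ * f b ∈ S ↔ a⁻¹ * b ∈ S) → ∃ c : H, ∀ g, f g = c * g)
    (t x : H) (hx : x ∈ S) (htx : t * x * t⁻¹ ∉ S)
    (m : ℕ) (hm : 2 ≤ m) : HasMGRR G m := by
  haveI : NeZero m := ⟨by omega⟩
  haveI : Fintype H := Fintype.ofFinite H
  -- the graph
  set Γm : SimpleGraph (H × ZMod m) :=
    { Adj := adjD S t x,
      symm := ⟨fun p q h => adjD_symm hSsym h⟩,
      loopless := ⟨fun p h => adjD_irrefl hS1 hm p h⟩ } with hΓm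
  have hΓadj : ∀ p q : H × ZMod m, Γm.Adj p q ↔ adjD S t x p q := fun p q => Iff.rfl
  -- the action
  set ρ : G →* Equiv.Perm (H × ZMod m) :=
    { toFun := fun g => diagT (φ g),
      map_one' := by
        refine Equiv.ext fun p => ?_
        show ((φ 1) * p.1, p.2) = (1 : Equiv.Perm (H × ZMod m)) p
        rw [Equiv.Perm.one_apply, map_one, one_mul]
      map_mul' := by
        intro a b
        refine Equiv.ext fun p => ?_
        show ((φ (a*b)) * p.1, p.2) = _
        rw [Equiv.Perm.mul_apply]
        show _ = ((φ a) * ((φ b) * p.1, p.2).1, p.2)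
        rw [map_mul, mul_assoc] } with hρ
  have hρapp : ∀ (g : G) (p : H × ZMod m), ρ g p = (φ g * p.1, p.2) := fun g p => rfl
  -- rigidity, by cases on m
  have hsig : ∀ σ : Equiv.Perm (H × ZMod m),
      (∀ p q, adjD S t x (σ p) (σ q) ↔ adjD S t x p q) →
      ∃ a : H, ∀ p : H × ZMod m, σ p = (a * p.1, p.2) := by
    rcases eq_or_lt_of_le hm with hm2 | hm3
    · subst hm2
      exact fun σ hσ => sigma_diag2 hS1 hSsym hx htx hrigid σ hσ
    · exact fun σ hσ => sigma_diag hS1 hSsym hx htx (by omega) hrigid σ hσ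
  -- regularity, by cases on m
  have hdeg : ∃ d : ℕ, ∀ v : H × ZMod m, {q : H × ZMod m | adjD S t x v q}.ncard = d := by
    rcases eq_or_lt_of_le hm with hm2 | hm3
    · subst hm2
      exact ⟨S.ncard + 3, fun v => nbr_card2 hS1 hSsym hx htx v.1 v.2⟩
    · exact ⟨S.ncard + 6, fun v => nbr_card3 hS1 hSsym hx htx (by omega) v.1 v.2⟩
  refine ⟨H × ZMod m, inferInstance, Γm, ρ, ?_, ?_, ?_, ?_, ?_, ?_⟩
  · -- regular
    obtain ⟨d, hd⟩ := hdeg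
    exact ⟨d, fun v => hd v⟩
  · -- every ρ g is an automorphism
    intro g u v
    rw [hΓadj, hΓadj, hρapp, hρapp]
    exact adjD_diag
  · -- every automorphism is some ρ g
    intro σ hσ
    obtain ⟨a, ha⟩ := hsig σ (fun p q => by rw [← hΓadj, ← hΓadj]; exact hσ p q)
    refine ⟨φ.symm a, ?_⟩
    refine Equiv.ext fun p => ?_
    rw [ha p, hρapp]
    simp
  · -- injectivity
    intro g1 g2 h
    have h2 : ρ g1 ((1:H), (0:ZMod m)) = ρ g2 ((1:H), (0:ZMod m)) := by rw [h]
    rw [hρapp, hρapp] at h2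
    have h3 := congrArg Prod.fst h2
    simp only [mul_one] at h3
    exact φ.injective h3
  · -- semiregularity
    intro g v h
    rw [hρapp] at h
    have h2 := congrArg Prod.fst h
    simp only at h2
    have h3 : φ g = 1 := by
      have h4 : φ g * v.1 = 1 * v.1 := by rw [h2, one_mul]
      exact mul_right_cancel h4
    apply φ.injective
    rw [h3, map_one]
  · -- orbits
    refine ⟨fun i : Fin m => (((1:H), ((i : ℕ) : ZMod m)) : H × ZMod m), ?_⟩
    intro v
    refine ⟨⟨(v.2).val, ZMod.val_lt v.2⟩, ⟨φ.symm v.1, ?_⟩, ?_⟩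
    · rw [hρapp]
      simp only [mul_one, MulEquiv.apply_symm_apply]
      exact Prod.ext rfl (ZMod.natCast_zmod_val v.2)
    · rintro j ⟨g, hg⟩
      rw [hρapp] at hg
      have h2 := congrArg Prod.snd hg
      simp only at h2
      apply Fin.ext
      simp only
      rw [← h2, ZMod.val_cast_of_lt j.isLt]

end Assemble

/-- a non-abelian finite group admitting a GRR admits an m-GRR for every m ≥ 1. -/
theorem statement_9 (G : Type*) [Group G] [Finite G]
    (hG : ¬ ∀ a b : G, a * b = b * a)
    (hGRR : HasMGRR G 1) (m : ℕ) (hm : 1 ≤ m) :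
    HasMGRR G m := by
  rcases eq_or_lt_of_le hm with hm1 | hm2
  · rw [← hm1]; exact hGRR
  · obtain ⟨S, hS1, hSsym, hrigid⟩ := extract_cayley G hGRR
    obtain ⟨t, x, hx, htx⟩ := extract_txS G hG S hrigid
    -- transport everything to a type in universe 0
    haveI : Small.{0} G := by infer_instance
    set H : Type := Shrink.{0} G with hH
    haveI : Finite H := Finite.of_equiv G (equivShrink G)
    set e : H ≃* G := Shrink.mulEquiv with he
    set S' : Set H := e ⁻¹' S with hS'
    have hmem : ∀ h : H, h ∈ S' ↔ e h ∈ S := fun h => Iff.rfl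
    refine core_construction (e.symm : G ≃* H) S' ?_ ?_ ?_ (e.symm t) (e.symm x) ?_ ?_ m
      (by omega)
    · intro h1
      rw [hmem, map_one] at h1
      exact hS1 h1
    · intro s hs
      rw [hmem, map_inv]
      exact hSsym _ ((hmem s).mp hs)
    · intro f hf hpres
      have hbij : Function.Bijective (fun g : G => e (f (e.symm g))) := by
        constructor
        · intro a b hab
          simp only at hab
          have h1 := hf.1 (e.injective hab)
          have h3 := congrArg e h1
          simpa using h3
        · intro b
          obtain ⟨a, ha⟩ := hf.2 (e.symm b)
          refine ⟨e a, ?_⟩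
          simp only [MulEquiv.symm_apply_apply]
          rw [ha, MulEquiv.apply_symm_apply]
      have hpres' : ∀ a b : G,
          ((fun g : G => e (f (e.symm g))) a)⁻¹ * ((fun g : G => e (f (e.symm g))) b) ∈ S ↔
            a⁻¹ * b ∈ S := by
        intro a b
        simp only
        have h1 : (e (f (e.symm a)))⁻¹ * e (f (e.symm b))
            = e ((f (e.symm a))⁻¹ * f (e.symm b)) := by
          rw [map_mul, map_inv]
        rw [h1]
        constructor
        · intro h3
          have h5 := (hpres (e.symm a) (e.symm b)).mp ((hmem _).mpr h3)
          have h6 := (hmem _).mp h5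
          rwa [map_mul, map_inv, MulEquiv.apply_symm_apply, MulEquiv.apply_symm_apply] at h6
        · intro h3
          have h4 : (e.symm a)⁻¹ * (e.symm b) ∈ S' := by
            rw [hmem, map_mul, map_inv, MulEquiv.apply_symm_apply, MulEquiv.apply_symm_apply]
            exact h3
          exact (hmem _).mp ((hpres (e.symm a) (e.symm b)).mpr h4)
      obtain ⟨c, hc⟩ := hrigid _ hbij hpres'
      refine ⟨e.symm c, fun g => ?_⟩
      have h1 := hc (e g)
      simp only [MulEquiv.symm_apply_apply] at h1
      have h2 := congrArg e.symm h1
      rw [MulEquiv.symm_apply_apply, map_mul] at h2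
      rw [h2, MulEquiv.symm_apply_apply]
    · rw [hmem, MulEquiv.apply_symm_apply]
      exact hx
    · intro h1
      rw [hmem] at h1
      apply htx
      rw [map_mul, map_mul, map_inv, MulEquiv.apply_symm_apply, MulEquiv.apply_symm_apply] at h1
      exact h1
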